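/- arXiv:2504.01720 — 6 statements merged into one kernel-verified Lean document; each statement's English description precedes it below -/
import Mathlib

section
/- For every input-erasing two-way general finite automaton M, there exists a linear grammar G such that L(G) = L(M). -/
namespace IETW

/-- An input-erasing two-way general finite automaton (IETWGFA). -/
structure GFA (T : Type) : Type 1 where
  Q : Type
  finQ : Finite Q
  start : Q
  accept : Set Q
  /-- Left rules: `(x, q, p)` represents `x q → p`. -/
  ruleL : Set (List T × Q × Q)
  /-- Right rules: `(q, x, p)` represents `q x → p`. -/
  ruleR : Set (Q × List T × Q)
  finL : ruleL.Finite
  finR : ruleR.Finite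

variable {T : Type}

/-- One move, labelled by its direction (`true` = left) and the number of erased symbols. -/
inductive GFA.Step (M : GFA T) :
    List T × M.Q × List T → Bool × ℕ → List T × M.Q × List T → Prop
  | left {u v x : List T} {q p : M.Q} (h : (x, q, p) ∈ M.ruleL) :
      GFA.Step M (u ++ x, q, v) (true, x.length) (u, p, v)
  | right {u v x : List T} {q p : M.Q} (h : (q, x, p) ∈ M.ruleR) :
      GFA.Step M (u, q, x ++ v) (false, x.length) (u, p, v)

/-- A computation along a list of move labels. -/
inductive GFA.Chain (M : GFA T) :
    List T × M.Q × List T → List (Bool × ℕ) → List T × M.Q × List T → Prop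
  | nil (c) : GFA.Chain M c [] c
  | cons {c c' c'' l ls} (h : GFA.Step M c l c') (h' : GFA.Chain M c' ls c'') :
      GFA.Chain M c (l :: ls) c''

/-- `L(M)`. -/
def GFA.lang (M : GFA T) : Set (List T) :=
  {w | ∃ x y ls f, w = x ++ y ∧ f ∈ M.accept ∧ M.Chain (x, M.start, y) ls ([], f, [])}

/-- The moves strictly alternate between left and right. -/
def Alternating (ls : List (Bool × ℕ)) : Prop :=
  ls.Chain' (fun a b => a.1 ≠ b.1)

/-- An even computation: alternating, of even length, and each odd-indexed move reads
the same number of symbols as the following move. -/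
def EvenTrace (ls : List (Bool × ℕ)) : Prop :=
  ls.length % 2 = 0 ∧ Alternating ls ∧
    ∀ i, 2 * i + 1 < ls.length →
      (ls.getD (2 * i) (true, 0)).2 = (ls.getD (2 * i + 1) (true, 0)).2

/-- An initialized even computation: one move followed by an even computation. -/
def InitEvenTrace (ls : List (Bool × ℕ)) : Prop :=
  ∃ l ls', ls = l :: ls' ∧ EvenTrace ls'

/-- `L(M)_alt`. -/
def GFA.langAlt (M : GFA T) : Set (List T) :=
  {w | ∃ x y ls f, w = x ++ y ∧ f ∈ M.accept ∧ Alternating ls ∧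
    M.Chain (x, M.start, y) ls ([], f, [])}

/-- `L(M)_even`. -/
def GFA.langEven (M : GFA T) : Set (List T) :=
  {w | ∃ x y ls f, w = x ++ y ∧ f ∈ M.accept ∧ EvenTrace ls ∧
    M.Chain (x, M.start, y) ls ([], f, [])}

/-- `L(M)_init-even`. -/
def GFA.langInitEven (M : GFA T) : Set (List T) :=
  {w | ∃ x y ls f, w = x ++ y ∧ f ∈ M.accept ∧ InitEvenTrace ls ∧
    M.Chain (x, M.start, y) ls ([], f, [])}

/-- All rules read at most one symbol (IETWSFA). -/
def GFA.Simple (M : GFA T) : Prop :=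
  (∀ r ∈ M.ruleL, r.1.length ≤ 1) ∧ (∀ r ∈ M.ruleR, r.2.1.length ≤ 1)

/-- No ε-rules: every rule reads at least one symbol. -/
def GFA.EpsFree (M : GFA T) : Prop :=
  (∀ r ∈ M.ruleL, r.1 ≠ ([] : List T)) ∧ (∀ r ∈ M.ruleR, r.2.1 ≠ ([] : List T))

/-- A linear grammar: rules `A → x B y` (encoded `(A, x, some (B, y))`)
or `A → x` (encoded `(A, x, none)`). -/
structure LG (T : Type) : Type 1 where
  N : Type
  finN : Finite N
  start : N
  rules : Set (N × List T × Option (N × List T))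
  finR : rules.Finite

/-- One derivation step on sentential forms `u A v`. -/
inductive LG.Der (G : LG T) :
    List T × G.N × List T → List T × G.N × List T → Prop
  | step {u v x y : List T} {A B : G.N} (h : (A, x, some (B, y)) ∈ G.rules) :
      LG.Der G (u, A, v) (u ++ x, B, y ++ v)

/-- `L(G)`. -/
def LG.lang (G : LG T) : Set (List T) :=
  {w | ∃ u A v x, Relation.ReflTransGen G.Der ([], G.start, []) (u, A, v) ∧
    (A, x, none) ∈ G.rules ∧ w = u ++ x ++ v}

/-- Even linear grammar: `|x| = |y|` in every rule `A → x B y`. -/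
def LG.Even (G : LG T) : Prop :=
  ∀ r ∈ G.rules, ∀ B (y : List T), r.2.2 = some (B, y) → r.2.1.length = y.length

theorem ietwgfa_to_lg {T : Type} (M : GFA T) : ∃ G : LG T, G.lang = M.lang := by
  classical
  haveI := M.finQ
  haveI : Finite (Option M.Q) := Finite.of_equiv (Sum M.Q PUnit.{1}) (Equiv.optionEquivSumPUnit.{0,0} M.Q).symm
  set rules : Set (Option M.Q × List T × Option (Option M.Q × List T)) :=
    ((fun f => ((none : Option M.Q), ([] : List T), some (some f, ([] : List T)))) '' M.accept)
    ∪ ((fun r : List T × M.Q × M.Q =>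
        ((some r.2.2 : Option M.Q), r.1, some ((some r.2.1 : Option M.Q), ([] : List T)))) '' M.ruleL)
    ∪ ((fun r : M.Q × List T × M.Q =>
        ((some r.2.2 : Option M.Q), ([] : List T), some ((some r.1 : Option M.Q), r.2.1))) '' M.ruleR)
    ∪ {((some M.start : Option M.Q), ([] : List T), none)} with hrules
  have hfin : rules.Finite := by
    refine (((M.accept.toFinite.image _).union (M.finL.image _)).union
      (M.finR.image _)).union (Set.finite_singleton _)
  refine ⟨⟨Option M.Q, inferInstance, none, rules, hfin⟩, ?_⟩
  set G : LG T := ⟨Option M.Q, inferInstance, none, rules, hfin⟩ with hG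
  ext w
  constructor
  · rintro ⟨u, A, v, x, hder, hfinal, hw⟩
    -- invariant along the derivation
    have key : ∀ c : List T × G.N × List T,
        Relation.ReflTransGen G.Der ([], (none : Option M.Q), []) c →
        (c.2.1 = none ∧ c.1 = [] ∧ c.2.2 = []) ∨
        ∃ q, c.2.1 = some q ∧ ∃ f ∈ M.accept, ∃ ls, M.Chain (c.1, q, c.2.2) ls ([], f, []) := by
      intro c h
      induction h with
      | refl => exact Or.inl ⟨rfl, rfl, rfl⟩
      | tail hstep₀ hstep ih =>
        cases hstep with
        | @step u' v' x' y' A' B' hrule =>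
          rcases hrule with ((⟨f, hf, heq⟩ | ⟨r, hr, heq⟩) | ⟨r, hr, heq⟩) | heq
          · -- start rule
            simp only [Prod.mk.injEq, Option.some.injEq] at heq
            obtain ⟨h1, h2, h3, h4⟩ := heq
            subst h1; subst h2; subst h3; subst h4
            rcases ih with ⟨-, hu, hv⟩ | ⟨q, hq, -⟩
            · simp only at hu hv
              subst hu; subst hv
              exact Or.inr ⟨f, rfl, f, hf, [], by simpa using GFA.Chain.nil _⟩
            · exact absurd hq (by simp)
          · -- left rule
            simp only [Prod.mk.injEq, Option.some.injEq] at heq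
            obtain ⟨h1, h2, h3, h4⟩ := heq
            rcases ih with ⟨hA, -, -⟩ | ⟨q, hq, f, hf, ls, hchain⟩
            · rw [← h1] at hA; exact absurd hA (by simp)
            · rw [← h1] at hq
              obtain rfl : r.2.2 = q := Option.some_injective _ hq
              subst h2; subst h3; subst h4
              simp only at hchain
              have hch := GFA.Chain.cons (GFA.Step.left (u := u') (v := v') hr) hchain
              exact Or.inr ⟨r.2.1, rfl, f, hf, _, by simpa using hch⟩
          · -- right rule
            simp only [Prod.mk.injEq, Option.some.injEq] at heq
            obtain ⟨h1, h2, h3, h4⟩ := heq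
            rcases ih with ⟨hA, -, -⟩ | ⟨q, hq, f, hf, ls, hchain⟩
            · rw [← h1] at hA; exact absurd hA (by simp)
            · rw [← h1] at hq
              obtain rfl : r.2.2 = q := Option.some_injective _ hq
              subst h2; subst h3; subst h4
              simp only at hchain
              have hch := GFA.Chain.cons (GFA.Step.right (u := u') (v := v') hr) hchain
              exact Or.inr ⟨r.1, rfl, f, hf, _, by simpa using hch⟩
          · -- terminal rule cannot appear here
            exact absurd heq (by simp)
    -- the terminal rule forces A = some M.start and x = []
    have hAx : A = some M.start ∧ x = [] := by
      rcases hfinal with ((⟨f, _, heq⟩ | ⟨r, _, heq⟩) | ⟨r, _, heq⟩) | heq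
      · exact absurd heq (by simp)
      · exact absurd heq (by simp)
      · exact absurd heq (by simp)
      · rcases heq with heq
        simp only [Set.mem_singleton_iff, Prod.mk.injEq] at heq
        exact ⟨heq.1, heq.2.1⟩
    obtain ⟨rfl, rfl⟩ := hAx
    rcases key _ hder with ⟨h, -, -⟩ | ⟨q, hq, f, hf, ls, hchain⟩
    · exact absurd h (by simp)
    · obtain rfl : M.start = q := Option.some_injective _ hq
      exact ⟨u, v, ls, f, by simpa using hw, hf, hchain⟩
  · rintro ⟨x, y, ls, f, hw, hf, hchain⟩
    have back : ∀ (ls : List (Bool × ℕ)) (c d : List T × M.Q × List T), M.Chain c ls d →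
        Relation.ReflTransGen G.Der (d.1, (some d.2.1 : Option M.Q), d.2.2)
          (c.1, (some c.2.1 : Option M.Q), c.2.2) := by
      intro ls c d h
      induction h with
      | nil c => exact Relation.ReflTransGen.refl
      | cons hstep hch ih =>
        refine Relation.ReflTransGen.tail ih ?_
        cases hstep with
        | @left u' v' x' q p hr =>
          have hmem : ((some p : Option M.Q), x', some ((some q : Option M.Q), ([] : List T)))
              ∈ rules := Or.inl (Or.inl (Or.inr ⟨(x', q, p), hr, rfl⟩))
          have := LG.Der.step (G := G) (u := u') (v := v') hmem
          simpa using this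
        | @right u' v' x' q p hr =>
          have hmem : ((some p : Option M.Q), ([] : List T), some ((some q : Option M.Q), x'))
              ∈ rules := Or.inl (Or.inr ⟨(q, x', p), hr, rfl⟩)
          have := LG.Der.step (G := G) (u := u') (v := v') hmem
          simpa using this
    have hstart : Relation.ReflTransGen G.Der ([], (none : Option M.Q), [])
        ([], (some f : Option M.Q), []) := by
      refine Relation.ReflTransGen.single ?_
      have hmem : ((none : Option M.Q), ([] : List T), some ((some f : Option M.Q), ([] : List T)))
          ∈ rules := Or.inl (Or.inl (Or.inl ⟨f, hf, rfl⟩))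
      have := LG.Der.step (G := G) (u := ([] : List T)) (v := ([] : List T)) hmem
      simpa using this
    have hder := hstart.trans (back ls (x, M.start, y) ([], f, []) hchain)
    refine ⟨x, some M.start, y, [], hder, Or.inr rfl, by simpa using hw⟩

end IETW
end

section
/- For every linear grammar G, there exists an input-erasing two-way general finite automaton M such that L(M) = L(G). -/
namespace IETW

variable {T : Type}

/-- The simulating automaton. -/
def mkGFA (G : LG T) : GFA T where
  Q := Option (G.N ⊕ {r // r ∈ G.rules})
  finQ := by
    haveI h1 : Finite G.N := G.finN
    haveI h2 : Finite {r // r ∈ G.rules} := G.finR.to_subtype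
    exact Finite.of_equiv ((G.N ⊕ {r // r ∈ G.rules}) ⊕ (PUnit : Type))
      (Equiv.optionEquivSumPUnit _).symm
  start := none
  accept := {some (Sum.inl G.start)}
  ruleL := {p | (∃ A x, (A, x, none) ∈ G.rules ∧ p = (x, none, some (Sum.inl A))) ∨
      (∃ r : {r // r ∈ G.rules}, ∃ B y, r.val.2.2 = some (B, y) ∧
        p = (r.val.2.1, some (Sum.inl B), some (Sum.inr r)))}
  ruleR := {p | ∃ r : {r // r ∈ G.rules}, ∃ B y, r.val.2.2 = some (B, y) ∧
      p = (some (Sum.inr r), y, some (Sum.inl r.val.1))}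
  finL := by
    have := G.finR.to_subtype
    apply Set.Finite.subset (Set.finite_range
      (fun r : {r // r ∈ G.rules} => (r.val.2.1, (none : Option (G.N ⊕ {r // r ∈ G.rules})),
        some (Sum.inl r.val.1))) |>.union (Set.finite_range
      (fun r : {r // r ∈ G.rules} => (r.val.2.1,
        some (Sum.inl ((r.val.2.2.map Prod.fst).getD r.val.1)), some (Sum.inr r)))))
    rintro p (⟨A, x, hr, rfl⟩ | ⟨r, B, y, hr, rfl⟩)
    · exact Or.inl ⟨⟨(A, x, none), hr⟩, rfl⟩
    · exact Or.inr ⟨r, by simp [hr]⟩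
  finR := by
    have := G.finR.to_subtype
    apply Set.Finite.subset (Set.finite_range
      (fun r : {r // r ∈ G.rules} => (some (Sum.inr r),
        (r.val.2.2.map Prod.snd).getD [], some (Sum.inl r.val.1))))
    rintro p ⟨r, B, y, hr, rfl⟩
    exact ⟨r, by simp [hr]⟩

lemma memL1 (G : LG T) {A x} (h : (A, x, none) ∈ G.rules) :
    (x, (none : (mkGFA G).Q), some (Sum.inl A)) ∈ (mkGFA G).ruleL :=
  Or.inl ⟨A, x, h, rfl⟩

lemma memL2 (G : LG T) {A : G.N} {x : List T} {B y} (h : (A, x, some (B, y)) ∈ G.rules) :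
    (x, some (Sum.inl B), some (Sum.inr ⟨(A, x, some (B, y)), h⟩)) ∈ (mkGFA G).ruleL :=
  Or.inr ⟨⟨_, h⟩, B, y, rfl, rfl⟩

lemma memR (G : LG T) {A : G.N} {x : List T} {B y} (h : (A, x, some (B, y)) ∈ G.rules) :
    ((some (Sum.inr ⟨(A, x, some (B, y)), h⟩) : (mkGFA G).Q), y, some (Sum.inl A)) ∈
      (mkGFA G).ruleR :=
  ⟨⟨_, h⟩, B, y, rfl, rfl⟩

/-- Invariant for the backward simulation. -/
def Inv (G : LG T) : List T × (mkGFA G).Q × List T → Prop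
  | (u, some (Sum.inl A), v) =>
      Relation.ReflTransGen G.Der ([], G.start, []) (u, A, v)
  | (u, some (Sum.inr r), v) => ∃ B y v', r.val.2.2 = some (B, y) ∧ v = y ++ v' ∧
      Relation.ReflTransGen G.Der ([], G.start, []) (u, r.val.1, v')
  | (u, none, v) => ∃ A x u', u = u' ++ x ∧ (A, x, none) ∈ G.rules ∧
      Relation.ReflTransGen G.Der ([], G.start, []) (u', A, v)

lemma chain_inv' (G : LG T) {c ls cf}
    (h : (mkGFA G).Chain c ls cf)
    (hcf : cf = ([], some (Sum.inl G.start), [])) : Inv G c := by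
  induction h with
  | nil c => subst hcf; exact Relation.ReflTransGen.refl
  | cons hstep _ ih =>
    cases hstep with
    | left h =>
      rcases h with ⟨A, x, hr, heq⟩ | ⟨r, B, y, hr, heq⟩
      · have heq := And.imp_right Prod.mk.inj (Prod.mk.inj heq)
        obtain ⟨rfl, rfl, rfl⟩ := heq
        exact ⟨A, _, _, rfl, hr, ih hcf⟩
      · have heq := And.imp_right Prod.mk.inj (Prod.mk.inj heq)
        obtain ⟨rfl, rfl, rfl⟩ := heq
        obtain ⟨B', y', v', hr', rfl, hd⟩ := ih hcf
        rw [hr] at hr'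
        obtain ⟨rfl, rfl⟩ := Prod.mk.injEq .. ▸ Option.some.inj hr'
        refine hd.tail ?_
        have hrule : (r.val.1, r.val.2.1, some (B, y)) ∈ G.rules := by
          have : r.val = (r.val.1, r.val.2.1, some (B, y)) := by
            rw [← hr]
          exact this ▸ r.property
        exact LG.Der.step hrule
    | right h =>
      rcases h with ⟨r, B, y, hr, heq⟩
      have heq := And.imp_right Prod.mk.inj (Prod.mk.inj heq)
      obtain ⟨rfl, rfl, rfl⟩ := heq
      exact ⟨B, _, _, hr, rfl, ih hcf⟩

lemma chain_inv (G : LG T) {c ls}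
    (h : (mkGFA G).Chain c ls ([], some (Sum.inl G.start), [])) : Inv G c :=
  chain_inv' G h rfl

lemma inv_chain' (G : LG T) {c}
    (h : Relation.ReflTransGen G.Der ([], G.start, []) c) :
    ∃ ls, (mkGFA G).Chain (c.1, some (Sum.inl c.2.1), c.2.2) ls
      ([], some (Sum.inl G.start), []) := by
  induction h with
  | refl => exact ⟨[], GFA.Chain.nil _⟩
  | tail _ hstep ih =>
    cases hstep with
    | @step u v x y A B hr =>
      obtain ⟨ls, hch⟩ := ih
      exact ⟨_, GFA.Chain.cons (GFA.Step.left (memL2 G hr))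
        (GFA.Chain.cons (GFA.Step.right (memR G hr)) hch)⟩

lemma inv_chain (G : LG T) {u A v}
    (h : Relation.ReflTransGen G.Der ([], G.start, []) (u, A, v)) :
    ∃ ls, (mkGFA G).Chain (u, some (Sum.inl A), v) ls ([], some (Sum.inl G.start), []) :=
  inv_chain' G h

theorem lg_to_ietwgfa {T : Type} (G : LG T) : ∃ M : GFA T, M.lang = G.lang := by
  refine ⟨mkGFA G, Set.ext fun w => ⟨?_, ?_⟩⟩
  · rintro ⟨x, y, ls, f, rfl, hf, hch⟩
    have hf' : f = some (Sum.inl G.start) := hf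
    subst hf'
    obtain ⟨A, x', u', rfl, hr, hd⟩ := chain_inv G hch
    exact ⟨u', A, y, x', hd, hr, by simp⟩
  · rintro ⟨u, A, v, x, hd, hr, rfl⟩
    obtain ⟨ls, hch⟩ := inv_chain G hd
    refine ⟨u ++ x, v, _, some (Sum.inl G.start), by simp, rfl,
      GFA.Chain.cons (GFA.Step.left (memL1 G hr)) hch⟩

end IETW
end

section
/- The family of languages accepted by input-erasing two-way general finite automata equals the family of linear languages. -/
namespace IETW

variable {T : Type}

/-! ### Auxiliary constructions -/

section GFAtoLG

/-- Linear grammar simulating a GFA. -/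
def toLG (M : GFA T) : LG T where
  N := Option M.Q
  finN := by haveI := M.finQ; haveI := Fintype.ofFinite M.Q; exact inferInstance
  start := none
  rules :=
    ((fun f => ((none : Option M.Q), ([] : List T), some (some f, ([] : List T)))) '' M.accept
      ∪ (fun r : List T × M.Q × M.Q =>
          ((some r.2.2 : Option M.Q), r.1, some ((some r.2.1 : Option M.Q), ([] : List T)))) '' M.ruleL)
      ∪ (fun r : M.Q × List T × M.Q =>
          ((some r.2.2 : Option M.Q), ([] : List T), some ((some r.1 : Option M.Q), r.2.1))) '' M.ruleR
      ∪ {((some M.start : Option M.Q), ([] : List T), (none : Option ((Option M.Q) × List T)))}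
  finR := by
    haveI := M.finQ
    exact (((M.accept.toFinite.image _).union (M.finL.image _)).union
      (M.finR.image _)).union (Set.finite_singleton _)

lemma chainToDer2 {M : GFA T} {c ls cf} (h : M.Chain c ls cf) :
    ∀ {f}, cf = ([], f, []) → f ∈ M.accept →
      Relation.ReflTransGen (toLG M).Der ([], (toLG M).start, []) (c.1, some c.2.1, c.2.2) := by
  induction h with
  | nil c =>
    intro f hcf hf
    subst hcf
    have hr : ((none, [], some (some f, [])) : _) ∈ (toLG M).rules :=
      Or.inl (Or.inl (Or.inl ⟨f, hf, rfl⟩))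
    exact Relation.ReflTransGen.single (by exact LG.Der.step (u := []) (v := []) hr)
  | cons h h' IH =>
    intro f hcf hf
    have IH' := IH hcf hf
    cases h with
    | left hmem =>
      rename_i u v x q p
      refine IH'.tail ?_
      have hr : ((some p, x, some (some q, ([] : List T))) : _) ∈ (toLG M).rules :=
        Or.inl (Or.inl (Or.inr ⟨(x, q, p), hmem, rfl⟩))
      simpa using LG.Der.step (u := u) (v := v) hr
    | right hmem =>
      rename_i u v x q p
      refine IH'.tail ?_
      have hr : ((some p, ([] : List T), some (some q, x)) : _) ∈ (toLG M).rules :=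
        Or.inl (Or.inr ⟨(q, x, p), hmem, rfl⟩)
      simpa using LG.Der.step (u := u) (v := v) hr

lemma derToChain2 {M : GFA T} {c}
    (h : Relation.ReflTransGen (toLG M).Der ([], (toLG M).start, []) c) :
    c = (([] : List T), (none : Option M.Q), ([] : List T)) ∨
      ∃ u' q v' ls f, c = (u', some q, v') ∧ f ∈ M.accept ∧
        M.Chain (u', q, v') ls ([], f, []) := by
  induction h with
  | refl => exact Or.inl rfl
  | tail hab hbc IH =>
    cases hbc with
    | step hmem =>
      rename_i u v x y A B
      right
      rcases hmem with ((⟨f, hf, heq⟩ | ⟨r, hrm, heq⟩) | ⟨r, hrm, heq⟩) | heq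
      · -- accept rule
        injection heq with e1 heq2
        injection heq2 with e2 e3
        injection e3 with e3
        injection e3 with e4 e5
        subst e1 e2 e4 e5
        rcases IH with hl | ⟨u', q', v', ls', f', hb, hf', hch⟩
        · injection hl with f1 hl2
          injection hl2 with f2 f3
          subst f1 f3
          exact ⟨[], f, [], [], f, rfl, hf, GFA.Chain.nil _⟩
        · injection hb with f1 hb2
          injection hb2 with f2 f3
          simp at f2
      · -- left rule
        obtain ⟨x₀, q₀, p₀⟩ := r
        injection heq with e1 heq2
        injection heq2 with e2 e3
        injection e3 with e3
        injection e3 with e4 e5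
        subst e1 e2 e4 e5
        rcases IH with hl | ⟨u', q', v', ls', f', hb, hf', hch⟩
        · injection hl with f1 hl2
          injection hl2 with f2 f3
          simp at f2
        · injection hb with f1 hb2
          injection hb2 with f2 f3
          obtain rfl : p₀ = q' := Option.some_injective _ f2
          subst f1 f3
          exact ⟨u ++ x₀, q₀, [] ++ v, _ :: _, _, rfl, hf',
            GFA.Chain.cons (GFA.Step.left (u := u) (v := v) hrm) hch⟩
      · -- right rule
        obtain ⟨q₀, x₀, p₀⟩ := r
        injection heq with e1 heq2
        injection heq2 with e2 e3
        injection e3 with e3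
        injection e3 with e4 e5
        subst e1 e2 e4 e5
        rcases IH with hl | ⟨u', q', v', ls', f', hb, hf', hch⟩
        · injection hl with f1 hl2
          injection hl2 with f2 f3
          simp at f2
        · injection hb with f1 hb2
          injection hb2 with f2 f3
          obtain rfl : p₀ = q' := Option.some_injective _ f2
          subst f1 f3
          exact ⟨u, q₀, x₀ ++ v, _ :: _, _, by rw [List.append_nil]; rfl, hf',
            GFA.Chain.cons (GFA.Step.right (u := u) (v := v) hrm) hch⟩
      · -- terminal rule: impossible here
        replace heq := Set.mem_singleton_iff.mp heq
        injection heq with e1 heq2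
        injection heq2 with e2 e3
        simp at e3

lemma toLG_lang (M : GFA T) : (toLG M).lang = M.lang := by
  ext w
  constructor
  · rintro ⟨u, A, v, x, hder, hterm, rfl⟩
    rcases hterm with ((⟨f, hf, heq⟩ | ⟨r, hrm, heq⟩) | ⟨r, hrm, heq⟩) | heq
    · injection heq with e1 heq2; injection heq2 with e2 e3; simp at e3
    · injection heq with e1 heq2; injection heq2 with e2 e3; simp at e3
    · injection heq with e1 heq2; injection heq2 with e2 e3; simp at e3
    · replace heq := Set.mem_singleton_iff.mp heq
      injection heq with e1 heq2
      injection heq2 with e2 e3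
      subst e1 e2
      rcases derToChain2 hder with hl | ⟨u', q', v', ls', f', hb, hf', hch⟩
      · injection hl with f1 hl2
        injection hl2 with f2 f3
        simp at f2
      · injection hb with f1 hb2
        injection hb2 with f2 f3
        obtain rfl : M.start = q' := Option.some_injective _ f2
        subst f1 f3
        exact ⟨u, v, _, _, by simp, hf', hch⟩
  · rintro ⟨x, y, ls, f, rfl, hf, hch⟩
    have := chainToDer2 hch rfl hf
    exact ⟨x, some M.start, y, [], this, Or.inr rfl, by simp⟩

end GFAtoLG

section LGtoGFA

/-- The (finite) type of rules of a linear grammar. -/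
abbrev LinSub (G : LG T) : Type := {r : G.N × List T × Option (G.N × List T) // r ∈ G.rules}

/-- State type of the simulating GFA. -/
abbrev QQ (G : LG T) : Type := Option (G.N ⊕ LinSub G)

def lrule (G : LG T) : LinSub G → List T × QQ G × QQ G
  | ⟨(A, x, some (B, y)), h⟩ => (x, some (Sum.inl B), some (Sum.inr ⟨(A, x, some (B, y)), h⟩))
  | ⟨(A, x, none), _⟩ => (x, none, some (Sum.inl A))

def rrule (G : LG T) (r : LinSub G) : QQ G × List T × QQ G :=
  (some (Sum.inr r), (r.1.2.2.map Prod.snd).getD [], some (Sum.inl r.1.1))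

/-- GFA simulating a linear grammar. -/
def toGFA (G : LG T) : GFA T where
  Q := QQ G
  finQ := by
    haveI := G.finN; haveI := G.finR.to_subtype
    haveI := Fintype.ofFinite G.N; haveI := Fintype.ofFinite (LinSub G)
    exact inferInstance
  start := none
  accept := {some (Sum.inl G.start)}
  ruleL := Set.range (lrule G)
  ruleR := Set.range (rrule G)
  finL := by haveI := G.finR.to_subtype; exact Set.finite_range _
  finR := by haveI := G.finR.to_subtype; exact Set.finite_range _

lemma chainToDer {G : LG T} {c ls cf} (h : (toGFA G).Chain c ls cf)
    (hcf : cf = (([] : List T), (some (Sum.inl G.start) : QQ G), ([] : List T))) :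
    (∀ A u v, c = (u, some (Sum.inl A), v) →
        Relation.ReflTransGen G.Der ([], G.start, []) (u, A, v)) ∧
    (∀ (r : LinSub G) u v B y, c = (u, some (Sum.inr r), v) → r.1.2.2 = some (B, y) →
        ∃ v', v = y ++ v' ∧ Relation.ReflTransGen G.Der ([], G.start, []) (u, r.1.1, v')) ∧
    (∀ u v, c = (u, (none : QQ G), v) →
        u ++ v ∈ G.lang ∨ c = (([] : List T), (some (Sum.inl G.start) : QQ G), ([] : List T))) := by
  induction h with
  | nil c =>
    subst hcf
    refine ⟨?_, ?_, ?_⟩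
    · intro A u v heq
      injection heq with f1 heq2
      injection heq2 with f2 f3
      subst f1 f3
      obtain rfl : G.start = A := Sum.inl.inj (Option.some_injective _ f2)
      exact Relation.ReflTransGen.refl
    · intro r u v B y heq hsome
      injection heq with f1 heq2
      injection heq2 with f2 f3
      simp at f2
    · intro u v heq
      exact Or.inr rfl
  | cons h h' IH =>
    have IH' := IH hcf
    cases h with
    | left hmem =>
      rename_i u₀ v₀ x q p
      obtain ⟨⟨⟨A', x', o⟩, hm⟩, hr⟩ := hmem
      cases o with
      | some By =>
        obtain ⟨B, y⟩ := By
        injection hr with e1 hr2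
        injection hr2 with e2 e3
        subst e1 e2 e3
        refine ⟨?_, ?_, ?_⟩
        · intro A u v heq
          injection heq with f1 heq2
          injection heq2 with f2 f3
          subst f1 f3
          obtain rfl : B = A := Sum.inl.inj (Option.some_injective _ f2)
          obtain ⟨v', rfl, hder⟩ :=
            IH'.2.1 ⟨(A', x', some (B, y)), hm⟩ u₀ v₀ B y rfl rfl
          exact hder.tail (LG.Der.step hm)
        · intro r u v B' y' heq hsome
          injection heq with f1 heq2
          injection heq2 with f2 f3
          simp at f2
        · intro u v heq
          injection heq with f1 heq2
          injection heq2 with f2 f3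
          simp at f2
      | none =>
        injection hr with e1 hr2
        injection hr2 with e2 e3
        subst e1 e2 e3
        refine ⟨?_, ?_, ?_⟩
        · intro A u v heq
          injection heq with f1 heq2
          injection heq2 with f2 f3
          simp at f2
        · intro r u v B' y' heq hsome
          injection heq with f1 heq2
          injection heq2 with f2 f3
          simp at f2
        · intro u v heq
          injection heq with f1 heq2
          injection heq2 with f2 f3
          subst f1 f3
          exact Or.inl ⟨u₀, A', v₀, x', IH'.1 A' u₀ v₀ rfl, hm, rfl⟩
    | right hmem =>
      rename_i u₀ v₀ x q p
      obtain ⟨⟨⟨A', x', o⟩, hm⟩, hr⟩ := hmem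
      injection hr with e1 hr2
      injection hr2 with e2 e3
      subst e1 e2 e3
      refine ⟨?_, ?_, ?_⟩
      · intro A u v heq
        injection heq with f1 heq2
        injection heq2 with f2 f3
        simp at f2
      · intro r u v B y heq hsome
        injection heq with f1 heq2
        injection heq2 with f2 f3
        subst f1 f3
        obtain rfl : (⟨(A', x', o), hm⟩ : LinSub G) = r :=
          Sum.inr.inj (Option.some_injective _ f2)
        have ho : o = some (B, y) := hsome
        subst ho
        exact ⟨v₀, rfl, IH'.1 A' u₀ v₀ rfl⟩
      · intro u v heq
        injection heq with f1 heq2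
        injection heq2 with f2 f3
        simp at f2

lemma derToChain {G : LG T} {c}
    (h : Relation.ReflTransGen G.Der ([], G.start, []) c) :
    ∃ ls, (toGFA G).Chain (c.1, (some (Sum.inl c.2.1) : QQ G), c.2.2) ls
      (([] : List T), (some (Sum.inl G.start) : QQ G), ([] : List T)) := by
  induction h with
  | refl => exact ⟨[], GFA.Chain.nil _⟩
  | tail hab hbc IH =>
    cases hbc with
    | step hmem =>
      rename_i u v x y A B
      obtain ⟨ls, hch⟩ := IH
      have h1 : ((x, some (Sum.inl B), some (Sum.inr ⟨(A, x, some (B, y)), hmem⟩)) : _)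
          ∈ (toGFA G).ruleL := ⟨⟨(A, x, some (B, y)), hmem⟩, rfl⟩
      have h2 : ((some (Sum.inr ⟨(A, x, some (B, y)), hmem⟩), y, some (Sum.inl A)) : _)
          ∈ (toGFA G).ruleR := ⟨⟨(A, x, some (B, y)), hmem⟩, rfl⟩
      exact ⟨_ :: _ :: ls,
        GFA.Chain.cons (GFA.Step.left (u := u) (v := y ++ v) h1)
          (GFA.Chain.cons (GFA.Step.right (u := u) (v := v) h2) hch)⟩

lemma toGFA_lang (G : LG T) : (toGFA G).lang = G.lang := by
  ext w
  constructor
  · rintro ⟨x₀, y₀, ls, f, rfl, hf, hch⟩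
    obtain rfl : f = some (Sum.inl G.start) := hf
    rcases (chainToDer hch rfl).2.2 x₀ y₀ rfl with h | h
    · exact h
    · injection h with g1 h2
      injection h2 with g2 g3
      cases g2
  · rintro ⟨u, A, v, x, hder, hterm, rfl⟩
    obtain ⟨ls, hch⟩ := derToChain hder
    have h1 : ((x, (none : QQ G), some (Sum.inl A)) : _) ∈ (toGFA G).ruleL :=
      ⟨⟨(A, x, none), hterm⟩, rfl⟩
    refine ⟨u ++ x, v, (true, x.length) :: ls, some (Sum.inl G.start), by simp, rfl, ?_⟩
    exact GFA.Chain.cons (GFA.Step.left (u := u) (v := v) h1) hch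

end LGtoGFA

theorem ietwgfa_family_eq_linear (T : Type) :
    {L : Set (List T) | ∃ M : GFA T, M.lang = L} =
      {L : Set (List T) | ∃ G : LG T, G.lang = L} := by
  ext L
  simp only [Set.mem_setOf_eq]
  constructor
  · rintro ⟨M, rfl⟩
    exact ⟨toLG M, toLG_lang M⟩
  · rintro ⟨G, rfl⟩
    exact ⟨toGFA G, toGFA_lang G⟩

end IETW
end

section
/- For every input-erasing two-way general finite automaton, there is an equivalent input-erasing two-way simple finite automaton; that is, the family of languages accepted by IETWGFAs equals the family accepted by IETWSFAs (automata whose every rule has left-hand side of length at most 2). -/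
namespace IETW

variable {T : Type}

/-! ### Auxiliary development: simulation of a general automaton by a simple one -/

/-- Reachability: there is some chain of moves. -/
def ReachS (M : GFA T) (a b : List T × M.Q × List T) : Prop :=
  ∃ ls, M.Chain a ls b

lemma chain_trans {M : GFA T} {a b c : List T × M.Q × List T} {ls ls'}
    (h : M.Chain a ls b) (h' : M.Chain b ls' c) : M.Chain a (ls ++ ls') c := by
  induction h with
  | nil => exact h'
  | cons hs _ ih => exact .cons hs (ih h')

lemma ReachS.refl {M : GFA T} (a : List T × M.Q × List T) : ReachS M a a :=
  ⟨[], .nil a⟩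

lemma ReachS.trans {M : GFA T} {a b c : List T × M.Q × List T}
    (h : ReachS M a b) (h' : ReachS M b c) : ReachS M a c := by
  obtain ⟨ls, hc⟩ := h; obtain ⟨ls', hc'⟩ := h'
  exact ⟨ls ++ ls', chain_trans hc hc'⟩

lemma ReachS.single {M : GFA T} {a b : List T × M.Q × List T} {l}
    (h : GFA.Step M a l b) : ReachS M a b :=
  ⟨[l], .cons h (.nil b)⟩

lemma reach_step_left {M : GFA T} {x : List T} {q p : M.Q} (h : (x, q, p) ∈ M.ruleL)
    {a u v : List T} (ha : a = u ++ x) : ReachS M (a, q, v) (u, p, v) := by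
  subst ha; exact ReachS.single (.left h)

lemma reach_step_right {M : GFA T} {x : List T} {q p : M.Q} (h : (q, x, p) ∈ M.ruleR)
    {b u v : List T} (hb : b = x ++ v) : ReachS M (u, q, b) (u, p, v) := by
  subst hb; exact ReachS.single (.right h)

/-- Descriptors for the simulation of left rules: `(y, p)` means "still erase `y` on the
left (from the right end of `u`), then enter state `p`"; `y` is a prefix of a left-rule word. -/
def LDesc (M : GFA T) : Set (List T × M.Q) :=
  {d | ∃ x q, (x, q, d.2) ∈ M.ruleL ∧ d.1 <+: x}

/-- Descriptors for the simulation of right rules. -/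
def RDesc (M : GFA T) : Set (M.Q × List T) :=
  {d | ∃ q x, (q, x, d.1) ∈ M.ruleR ∧ d.2 <:+ x}

lemma prefix_set_finite (x : List T) : {y : List T | y <+: x}.Finite :=
  (List.finite_toSet x.inits).subset fun y hy => (List.mem_inits y x).2 hy

lemma sublist_set_finite (x : List T) : {y : List T | List.Sublist y x}.Finite :=
  (List.finite_toSet x.sublists).subset fun y hy => (List.mem_sublists (s := y) (t := x)).2 hy

lemma suffix_set_finite (x : List T) : {y : List T | y <:+ x}.Finite :=
  (List.finite_toSet x.tails).subset fun y hy => (List.mem_tails y x).2 hy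

lemma ldesc_finite (M : GFA T) : (LDesc M).Finite := by
  apply Set.Finite.subset
    (Set.Finite.biUnion M.finL fun r _ =>
      (prefix_set_finite r.1).prod (Set.finite_singleton r.2.2))
  rintro ⟨y, p⟩ ⟨x, q, hr, hp⟩
  exact Set.mem_biUnion hr ⟨hp, rfl⟩

lemma rdesc_finite (M : GFA T) : (RDesc M).Finite := by
  apply Set.Finite.subset
    (Set.Finite.biUnion M.finR fun r _ =>
      (Set.finite_singleton r.2.2).prod (suffix_set_finite r.2.1))
  rintro ⟨p, y⟩ ⟨q, x, hr, hp⟩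
  exact Set.mem_biUnion hr ⟨rfl, hp⟩

/-- The state type of the simulating simple automaton. -/
@[reducible] def QS (M : GFA T) : Type := M.Q ⊕ (↥(LDesc M) ⊕ ↥(RDesc M))

lemma finQS (M : GFA T) : Finite (QS M) := by
  haveI := M.finQ
  haveI := (ldesc_finite M).to_subtype
  haveI := (rdesc_finite M).to_subtype
  unfold QS; infer_instance

lemma ldesc_pre {M : GFA T} {y z : List T} {p : M.Q}
    (h : (z, p) ∈ LDesc M) (hp : y <+: z) : (y, p) ∈ LDesc M := by
  obtain ⟨x, q, hr, hx⟩ := h; exact ⟨x, q, hr, hp.trans hx⟩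

lemma rdesc_suf {M : GFA T} {y z : List T} {p : M.Q}
    (h : (p, z) ∈ RDesc M) (hp : y <:+ z) : (p, y) ∈ RDesc M := by
  obtain ⟨q, x, hr, hx⟩ := h; exact ⟨q, x, hr, hp.trans hx⟩

/-- Left rules of the simulating automaton. -/
def ruleL' (M : GFA T) : Set (List T × QS M × QS M) :=
  {t | (∃ x q p, ∃ h : (x, q, p) ∈ M.ruleL,
        t = ([], Sum.inl q, Sum.inr (Sum.inl ⟨(x, p), ⟨x, q, h, List.prefix_refl x⟩⟩)))
    ∨ (∃ y a p, ∃ h : (y ++ [a], p) ∈ LDesc M,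
        t = ([a], Sum.inr (Sum.inl ⟨(y ++ [a], p), h⟩),
              Sum.inr (Sum.inl ⟨(y, p), ldesc_pre h ⟨[a], rfl⟩⟩)))
    ∨ (∃ p, ∃ h : (([] : List T), p) ∈ LDesc M,
        t = ([], Sum.inr (Sum.inl ⟨([], p), h⟩), Sum.inl p))}

/-- Right rules of the simulating automaton. -/
def ruleR' (M : GFA T) : Set (QS M × List T × QS M) :=
  {t | (∃ x q p, ∃ h : (q, x, p) ∈ M.ruleR,
        t = (Sum.inl q, [], Sum.inr (Sum.inr ⟨(p, x), ⟨q, x, h, List.suffix_refl x⟩⟩)))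
    ∨ (∃ a y p, ∃ h : (p, a :: y) ∈ RDesc M,
        t = (Sum.inr (Sum.inr ⟨(p, a :: y), h⟩), [a],
              Sum.inr (Sum.inr ⟨(p, y), rdesc_suf h ⟨[a], rfl⟩⟩)))
    ∨ (∃ p, ∃ h : (p, ([] : List T)) ∈ RDesc M,
        t = (Sum.inr (Sum.inr ⟨(p, []), h⟩), [], Sum.inl p))}

lemma ruleL'_finite (M : GFA T) : (ruleL' M).Finite := by
  haveI := finQS M
  apply Set.Finite.subset
    (((Set.Finite.biUnion M.finL fun r _ =>
        sublist_set_finite r.1).insert ([] : List T)).prod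
      (Set.finite_univ (α := QS M × QS M)))
  rintro ⟨w, q, p⟩ (⟨x, q', p', h, heq⟩ | ⟨y, a, p', h, heq⟩ | ⟨p', h, heq⟩) <;> rw [heq]
  · exact ⟨Set.mem_insert _ _, trivial⟩
  · obtain ⟨x, q'', hr, hx⟩ := h
    refine ⟨Set.mem_insert_iff.2 (Or.inr (Set.mem_biUnion hr ?_)), trivial⟩
    exact (List.sublist_append_right y [a]).trans hx.sublist
  · exact ⟨Set.mem_insert _ _, trivial⟩

lemma ruleR'_finite (M : GFA T) : (ruleR' M).Finite := by
  haveI := finQS M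
  apply Set.Finite.subset
    ((Set.finite_univ (α := QS M)).prod
      (((Set.Finite.biUnion M.finR fun r _ =>
        sublist_set_finite r.2.1).insert ([] : List T)).prod
        (Set.finite_univ (α := QS M))))
  rintro ⟨q, w, p⟩ (⟨x, q', p', h, heq⟩ | ⟨a, y, p', h, heq⟩ | ⟨p', h, heq⟩) <;> rw [heq]
  · exact ⟨trivial, Set.mem_insert _ _, trivial⟩
  · obtain ⟨q'', x, hr, hx⟩ := h
    refine ⟨trivial, Set.mem_insert_iff.2 (Or.inr (Set.mem_biUnion hr ?_)), trivial⟩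
    exact (List.cons_sublist_cons.2 (List.nil_sublist y)).trans hx.sublist
  · exact ⟨trivial, Set.mem_insert _ _, trivial⟩

/-- The simulating simple automaton. -/
@[reducible] def simpM (M : GFA T) : GFA T where
  Q := QS M
  finQ := finQS M
  start := Sum.inl M.start
  accept := Sum.inl '' M.accept
  ruleL := ruleL' M
  ruleR := ruleR' M
  finL := ruleL'_finite M
  finR := ruleR'_finite M

lemma simpM_simple (M : GFA T) : (simpM M).Simple := by
  constructor
  · rintro ⟨w, q, p⟩ (⟨x, q', p', h, heq⟩ | ⟨y, a, p', h, heq⟩ | ⟨p', h, heq⟩) <;>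
      rw [heq] <;> simp
  · rintro ⟨q, w, p⟩ (⟨x, q', p', h, heq⟩ | ⟨a, y, p', h, heq⟩ | ⟨p', h, heq⟩) <;>
      rw [heq] <;> simp

/-! #### Forward simulation -/

lemma fwd_consume_left {M : GFA T} (y : List T) (p : M.Q) (h : (y, p) ∈ LDesc M)
    (u v : List T) :
    ReachS (simpM M) (u ++ y, Sum.inr (Sum.inl ⟨(y, p), h⟩), v) (u, Sum.inl p, v) := by
  induction y using List.reverseRecOn with
  | nil =>
      apply reach_step_left (M := simpM M) (x := ([] : List T))
        (show (([] : List T), Sum.inr (Sum.inl ⟨(([] : List T), p), h⟩), Sum.inl p)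
            ∈ ruleL' M from Or.inr (Or.inr ⟨p, h, rfl⟩))
      simp
  | append_singleton y a ih =>
      have h' : (y, p) ∈ LDesc M := ldesc_pre h ⟨[a], rfl⟩
      refine ReachS.trans ?_ (ih h')
      apply reach_step_left (M := simpM M) (x := [a])
        (show ([a], Sum.inr (Sum.inl ⟨(y ++ [a], p), h⟩),
            Sum.inr (Sum.inl ⟨(y, p), h'⟩)) ∈ ruleL' M from
          Or.inr (Or.inl ⟨y, a, p, h, rfl⟩))
      simp

lemma fwd_consume_right {M : GFA T} (y : List T) (p : M.Q) (h : (p, y) ∈ RDesc M)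
    (u v : List T) :
    ReachS (simpM M) (u, Sum.inr (Sum.inr ⟨(p, y), h⟩), y ++ v) (u, Sum.inl p, v) := by
  induction y with
  | nil =>
      apply reach_step_right (M := simpM M) (x := ([] : List T))
        (show (Sum.inr (Sum.inr ⟨(p, ([] : List T)), h⟩), ([] : List T), Sum.inl p)
            ∈ ruleR' M from Or.inr (Or.inr ⟨p, h, rfl⟩))
      simp
  | cons a y ih =>
      have h' : (p, y) ∈ RDesc M := rdesc_suf h ⟨[a], rfl⟩
      refine ReachS.trans ?_ (ih h')
      apply reach_step_right (M := simpM M) (x := [a])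
        (show (Sum.inr (Sum.inr ⟨(p, a :: y), h⟩), [a],
            Sum.inr (Sum.inr ⟨(p, y), h'⟩)) ∈ ruleR' M from
          Or.inr (Or.inl ⟨a, y, p, h, rfl⟩))
      simp

lemma fwd_left {M : GFA T} {x : List T} {q p : M.Q} (h : (x, q, p) ∈ M.ruleL)
    (u v : List T) :
    ReachS (simpM M) (u ++ x, Sum.inl q, v) (u, Sum.inl p, v) := by
  have hd : (x, p) ∈ LDesc M := ⟨x, q, h, List.prefix_refl x⟩
  refine ReachS.trans ?_ (fwd_consume_left x p hd u v)
  apply reach_step_left (M := simpM M) (x := ([] : List T))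
    (show (([] : List T), Sum.inl q, Sum.inr (Sum.inl ⟨(x, p), hd⟩)) ∈ ruleL' M from
      Or.inl ⟨x, q, p, h, rfl⟩)
  simp

lemma fwd_right {M : GFA T} {x : List T} {q p : M.Q} (h : (q, x, p) ∈ M.ruleR)
    (u v : List T) :
    ReachS (simpM M) (u, Sum.inl q, x ++ v) (u, Sum.inl p, v) := by
  have hd : (p, x) ∈ RDesc M := ⟨q, x, h, List.suffix_refl x⟩
  refine ReachS.trans ?_ (fwd_consume_right x p hd u v)
  apply reach_step_right (M := simpM M) (x := ([] : List T))
    (show (Sum.inl q, ([] : List T), Sum.inr (Sum.inr ⟨(p, x), hd⟩)) ∈ ruleR' M from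
      Or.inl ⟨x, q, p, h, rfl⟩)
  simp

/-- Embedding of configurations. -/
def embC (M : GFA T) (c : List T × M.Q × List T) : List T × (simpM M).Q × List T :=
  (c.1, Sum.inl c.2.1, c.2.2)

lemma lift_chain {M : GFA T} {c d : List T × M.Q × List T} {ls}
    (h : M.Chain c ls d) : ReachS (simpM M) (embC M c) (embC M d) := by
  induction h with
  | nil c => exact ReachS.refl _
  | cons hs _ ih =>
      refine ReachS.trans ?_ ih
      cases hs with
      | left h => exact fwd_left h _ _
      | right h => exact fwd_right h _ _

/-! #### Backward simulation -/

lemma bwd {M : GFA T} {ls} {c d : List T × (simpM M).Q × List T}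
    (h : (simpM M).Chain c ls d) (f : M.Q) (hd : d = ([], Sum.inl f, [])) :
    (∀ u q v, c = (u, Sum.inl q, v) → ReachS M (u, q, v) ([], f, [])) ∧
    (∀ u y p v (hy : (y, p) ∈ LDesc M),
        c = (u, Sum.inr (Sum.inl ⟨(y, p), hy⟩), v) →
        ∃ u', u = u' ++ y ∧ ReachS M (u', p, v) ([], f, [])) ∧
    (∀ u p y v (hy : (p, y) ∈ RDesc M),
        c = (u, Sum.inr (Sum.inr ⟨(p, y), hy⟩), v) →
        ∃ v', v = y ++ v' ∧ ReachS M (u, p, v') ([], f, [])) := by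
  induction h with
  | nil c =>
      subst hd
      refine ⟨?_, ?_, ?_⟩
      · rintro u q v hc
        simp only [Prod.mk.injEq, Sum.inl.injEq] at hc
        obtain ⟨rfl, rfl, rfl⟩ := hc
        exact ReachS.refl _
      · rintro u y p v hy hc
        simp at hc
      · rintro u p y v hy hc
        simp at hc
  | cons hs _ ih =>
      have IH := ih hd
      clear ih
      cases hs with
      | @left u₀ v₀ x₀ q₀ p₀ hrule =>
          rcases hrule with ⟨x, q, p, hr, heq⟩ | ⟨y, a, p, hmem, heq⟩ | ⟨p, hmem, heq⟩ <;>
            simp only [Prod.mk.injEq] at heq <;>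
            obtain ⟨rfl, rfl, rfl⟩ := heq
          · -- entry rule
            refine ⟨?_, ?_, ?_⟩
            · rintro u q' v hc
              simp only [List.append_nil, Prod.mk.injEq, Sum.inl.injEq] at hc
              obtain ⟨rfl, rfl, rfl⟩ := hc
              obtain ⟨u', rfl, hre⟩ := IH.2.1 u₀ x p v₀ _ rfl
              exact (reach_step_left hr rfl).trans hre
            · rintro u y p' v hy hc
              simp at hc
            · rintro u p' y v hy hc
              simp at hc
          · -- consume rule
            refine ⟨?_, ?_, ?_⟩
            · rintro u q' v hc
              simp at hc
            · rintro u z p' v hz hc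
              simp only [Prod.mk.injEq, Sum.inr.injEq, Sum.inl.injEq,
                Subtype.mk.injEq] at hc
              obtain ⟨h1, ⟨h2, rfl⟩, rfl⟩ := hc
              obtain ⟨u', rfl, hre⟩ := IH.2.1 u₀ y p v₀ _ rfl
              refine ⟨u', ?_, hre⟩
              rw [← h1, ← h2]
              simp
            · rintro u p' y' v hy hc
              simp at hc
          · -- exit rule
            refine ⟨?_, ?_, ?_⟩
            · rintro u q' v hc
              simp at hc
            · rintro u z p' v hz hc
              simp only [List.append_nil, Prod.mk.injEq, Sum.inr.injEq, Sum.inl.injEq,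
                Subtype.mk.injEq] at hc
              obtain ⟨h1, ⟨h2, rfl⟩, rfl⟩ := hc
              have hre := IH.1 u₀ p v₀ rfl
              refine ⟨u₀, ?_, hre⟩
              rw [← h1, ← h2]
              simp
            · rintro u p' y v hy hc
              simp at hc
      | @right u₀ v₀ x₀ q₀ p₀ hrule =>
          rcases hrule with ⟨x, q, p, hr, heq⟩ | ⟨a, y, p, hmem, heq⟩ | ⟨p, hmem, heq⟩ <;>
            simp only [Prod.mk.injEq] at heq <;>
            obtain ⟨rfl, rfl, rfl⟩ := heq
          · -- entry rule
            refine ⟨?_, ?_, ?_⟩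
            · rintro u q' v hc
              simp only [List.nil_append, Prod.mk.injEq, Sum.inl.injEq] at hc
              obtain ⟨rfl, rfl, rfl⟩ := hc
              obtain ⟨v', rfl, hre⟩ := IH.2.2 u₀ p x v₀ _ rfl
              exact (reach_step_right hr rfl).trans hre
            · rintro u y p' v hy hc
              simp at hc
            · rintro u p' y v hy hc
              simp at hc
          · -- consume rule
            refine ⟨?_, ?_, ?_⟩
            · rintro u q' v hc
              simp at hc
            · rintro u z p' v hz hc
              simp at hc
            · rintro u p' z v hz hc
              simp only [Prod.mk.injEq, Sum.inr.injEq, Subtype.mk.injEq] at hc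
              obtain ⟨rfl, ⟨rfl, h2⟩, h3⟩ := hc
              obtain ⟨v', rfl, hre⟩ := IH.2.2 u₀ p y v₀ _ rfl
              refine ⟨v', ?_, hre⟩
              rw [← h3, ← h2]
              simp
          · -- exit rule
            refine ⟨?_, ?_, ?_⟩
            · rintro u q' v hc
              simp at hc
            · rintro u z p' v hz hc
              simp at hc
            · rintro u p' z v hz hc
              simp only [List.nil_append, Prod.mk.injEq, Sum.inr.injEq,
                Subtype.mk.injEq] at hc
              obtain ⟨rfl, ⟨rfl, h2⟩, h3⟩ := hc
              have hre := IH.1 u₀ p v₀ rfl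
              refine ⟨v₀, ?_, hre⟩
              rw [← h3, ← h2]
              simp

lemma simpM_lang (M : GFA T) : (simpM M).lang = M.lang := by
  ext w
  constructor
  · rintro ⟨x, y, ls, f', rfl, hf', hch⟩
    obtain ⟨f, hf, rfl⟩ := hf'
    obtain ⟨ls', hch'⟩ := (bwd hch f rfl).1 x M.start y rfl
    exact ⟨x, y, ls', f, rfl, hf, hch'⟩
  · rintro ⟨x, y, ls, f, rfl, hf, hch⟩
    obtain ⟨ls', hch'⟩ := lift_chain hch
    exact ⟨x, y, ls', Sum.inl f, rfl, ⟨f, hf, rfl⟩, hch'⟩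

theorem ietwgfa_family_eq_ietwsfa (T : Type) :
    {L : Set (List T) | ∃ M : GFA T, M.lang = L} =
      {L : Set (List T) | ∃ M : GFA T, M.Simple ∧ M.lang = L} := by
  ext L
  simp only [Set.mem_setOf_eq]
  constructor
  · rintro ⟨M, rfl⟩
    exact ⟨simpM M, simpM_simple M, simpM_lang M⟩
  · rintro ⟨M, -, h⟩
    exact ⟨M, h⟩

end IETW
end

section
/- The language L = {aⁿbⁿcᵐ | n, m ≥ 0} is accepted by some IETWSFA under alternating computation, but is not accepted by any ε-free IETWSFA under alternating computation; hence the family of languages accepted by ε-free IETWSFAs under alternating computation is strictly contained in that accepted by general IETWSFAs under alternating computation. -/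
namespace IETW

variable {T : Type}

/-- The language `{aⁿbⁿcᵐ | n, m ≥ 0}` over the three-letter alphabet `Fin 3`. -/
def abcLang : Set (List (Fin 3)) :=
  {w : List (Fin 3) | ∃ n m : ℕ, w = List.replicate n (0 : Fin 3) ++ List.replicate n (1 : Fin 3) ++ List.replicate m (2 : Fin 3)}

variable {M : GFA T}

lemma step_inv {c c' : List T × M.Q × List T} {l} (h : M.Step c l c') :
    (∃ u xx p, (xx, c.2.1, p) ∈ M.ruleL ∧ c.1 = u ++ xx ∧ l = (true, xx.length) ∧ c' = (u, p, c.2.2)) ∨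
    (∃ v xx p, (c.2.1, xx, p) ∈ M.ruleR ∧ c.2.2 = xx ++ v ∧ l = (false, xx.length) ∧ c' = (c.1, p, v)) := by
  cases h with
  | left h => exact Or.inl ⟨_, _, _, h, rfl, rfl, rfl⟩
  | right h => exact Or.inr ⟨_, _, _, h, rfl, rfl, rfl⟩

lemma chain_append {c c' c'' ls1 ls2} (h : M.Chain c ls1 c') (h' : M.Chain c' ls2 c'') :
    M.Chain c (ls1 ++ ls2) c'' := by
  induction h with
  | nil => exact h'
  | cons hs _ ih => exact .cons hs (ih h')

lemma chain_snoc {c c' c'' ls l} (h : M.Chain c ls c') (h' : M.Step c' l c'') :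
    M.Chain c (ls ++ [l]) c'' :=
  chain_append h (.cons h' (.nil _))

lemma step_fix {c c' : List T × M.Q × List T} {l} (h : M.Step c l c') :
    c'.1 <+: c.1 ∧ c'.2.2 <:+ c.2.2 := by
  rcases step_inv h with ⟨u, xx, p, _, h1, _, h2⟩ | ⟨v, xx, p, _, h1, _, h2⟩ <;> subst h2 <;>
    simp [h1]

lemma chain_fix {c c' ls} (h : M.Chain c ls c') : c'.1 <+: c.1 ∧ c'.2.2 <:+ c.2.2 := by
  induction h with
  | nil => simp
  | cons hs _ ih => exact ⟨ih.1.trans (step_fix hs).1, ih.2.trans (step_fix hs).2⟩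

lemma labels_one (hS : M.Simple) (hE : M.EpsFree) {c c' ls} (h : M.Chain c ls c') :
    ∀ l ∈ ls, l.2 = 1 := by
  induction h with
  | nil => simp
  | cons hs _ ih =>
    intro l hl
    rcases List.mem_cons.1 hl with rfl | hl
    · rcases step_inv hs with ⟨u, xx, p, hr, h1, h2, h3⟩ | ⟨v, xx, p, hr, h1, h2, h3⟩ <;> subst h2
      · have h4 : xx.length ≤ 1 := hS.1 _ hr
        have h5 : xx ≠ [] := hE.1 _ hr
        have : xx.length ≠ 0 := by simpa [List.length_eq_zero_iff] using h5
        simp only; omega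
      · have h4 : xx.length ≤ 1 := hS.2 _ hr
        have h5 : xx ≠ [] := hE.2 _ hr
        have : xx.length ≠ 0 := by simpa [List.length_eq_zero_iff] using h5
        simp only; omega
    · exact ih l hl

lemma chain_count {c c' ls} (h : M.Chain c ls c') (h1 : ∀ l ∈ ls, l.2 = 1) :
    c.1.length = c'.1.length + ls.countP (fun l => l.1) ∧
    c.2.2.length = c'.2.2.length + ls.countP (fun l => !l.1) := by
  induction h with
  | nil => simp
  | cons hs _ ih =>
    rename_i c c1 c2 l ls' _
    have hl : l.2 = 1 := h1 l (by simp)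
    have ih' := ih (fun l hl => h1 l (by simp [hl]))
    rcases step_inv hs with ⟨u, xx, p, hr, he, h2, h3⟩ | ⟨v, xx, p, hr, he, h2, h3⟩ <;>
      subst h2 <;> subst h3 <;>
      simp only [List.countP_cons] at * <;>
      simp only [he] at * <;> simp at * <;> omega

lemma chain_nil_inv {c c' : List T × M.Q × List T} (h : M.Chain c [] c') : c = c' := by
  cases h; rfl

lemma chain_repl {x₀ y₀ : List T} {q' : M.Q} :
    ∀ {ls x y q}, M.Chain (x₀ ++ x, q, y ++ y₀) ls (x₀, q', y₀) →
    ∀ z z', M.Chain (z ++ x, q, y ++ z') ls (z, q', z') := by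
  intro ls
  induction ls with
  | nil =>
    intro x y q h z z'
    have h1 := chain_nil_inv h
    injection h1 with e1 h2
    injection h2 with e2 e3
    obtain rfl : x = [] := by simpa using e1
    obtain rfl : y = [] := by simpa using e3
    rw [List.append_nil, List.nil_append, e2]
    exact GFA.Chain.nil _
  | cons l ls ih =>
    intro x y q h z z'
    cases h with
    | cons hs hc =>
      rename_i c1
      rcases step_inv hs with ⟨u, xx, p, hr, he, hl, hcc⟩ | ⟨v, xx, p, hr, he, hl, hcc⟩ <;>
        simp only at hr he hcc <;> subst hcc <;> subst hl
      · obtain ⟨u', rfl⟩ : x₀ <+: u := (chain_fix hc).1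
        obtain rfl : x = u' ++ xx := by
          exact List.append_cancel_left (he.trans (List.append_assoc x₀ u' xx))
        have step : M.Step (z ++ (u' ++ xx), q, y ++ z') (true, xx.length) (z ++ u', p, y ++ z') := by
          rw [← List.append_assoc]
          exact GFA.Step.left hr
        exact .cons step (ih hc z z')
      · obtain ⟨v', rfl⟩ : y₀ <:+ v := (chain_fix hc).2
        obtain rfl : y = xx ++ v' := by
          have := he.trans (List.append_assoc xx v' y₀).symm
          exact List.append_cancel_right this
        have step : M.Step (z ++ x, q, (xx ++ v') ++ z') (false, xx.length) (z ++ x, p, v' ++ z') := by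
          rw [List.append_assoc]
          exact GFA.Step.right hr
        exact .cons step (ih hc z z')

lemma chain_configs {c c' ls} (h : M.Chain c ls c') :
    ∃ g : ℕ → (List T × M.Q × List T), g 0 = c ∧ g ls.length = c' ∧
      ∀ i < ls.length, M.Step (g i) (ls.getD i (true, 0)) (g (i+1)) := by
  induction h with
  | nil => exact ⟨fun _ => _, rfl, rfl, by simp⟩
  | cons hs _ ih =>
    rename_i c c1 c2 l ls' _
    obtain ⟨g, hg0, hgl, hgs⟩ := ih
    refine ⟨fun i => if i = 0 then c else g (i - 1), by simp, by simp [hgl], ?_⟩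
    intro i hi
    match i with
    | 0 => simpa [hg0] using hs
    | (j+1) =>
      simp only [List.length_cons] at hi
      simpa using hgs j (by omega)

lemma chain_of_configs {ls : List (Bool × ℕ)} {g : ℕ → (List T × M.Q × List T)}
    (hgs : ∀ i < ls.length, M.Step (g i) (ls.getD i (true, 0)) (g (i+1))) :
    ∀ i j, i ≤ j → j ≤ ls.length → M.Chain (g i) ((ls.take j).drop i) (g j) := by
  intro i j hij hj
  induction j, hij using Nat.le_induction with
  | base =>
    have : (ls.take i).drop i = [] := by simp
    rw [this]; exact .nil _
  | succ j hij ih =>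
    have hjl : j < ls.length := by omega
    have hstep := hgs j hjl
    have htake : (ls.take (j+1)).drop i = (ls.take j).drop i ++ [ls.getD j (true, 0)] := by
      rw [List.take_succ]
      rw [List.drop_append_of_le_length (by simp; omega)]
      congr 1
      rw [List.getD_eq_getElem?_getD]
      cases h : ls[j]? with
      | none => simp [List.getElem?_eq_none_iff] at h; omega
      | some a => simp
    rw [htake]
    exact chain_snoc (ih (by omega)) hstep

lemma alt_count : ∀ ls : List (Bool × ℕ), Alternating ls → ls.length % 2 = 0 →
    2 * ls.countP (fun l => l.1) = ls.length
  | [] => by simp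
  | [a] => by simp
  | a :: b :: t => by
    intro h hl
    have hab : a.1 ≠ b.1 := List.isChain_cons.1 h |>.1 _ rfl
    have ht : Alternating t := (h.tail).tail
    have ih := alt_count t ht (by simp only [List.length_cons] at hl; omega)
    simp only [List.countP_cons, List.length_cons]
    have : (if (fun l : Bool × ℕ => l.1) b then 1 else 0) + (if (fun l : Bool × ℕ => l.1) a then 1 else 0) = 1 := by
      rcases a with ⟨a1, a2⟩; rcases b with ⟨b1, b2⟩
      cases a1 <;> cases b1 <;> simp_all
    simp only at this ⊢
    omega

lemma alt_adj {ls : List (Bool × ℕ)} (h : Alternating ls) {i : ℕ} (hi : i + 1 < ls.length) :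
    (ls.getD i (true, 0)).1 ≠ (ls.getD (i+1) (true, 0)).1 := by
  rw [List.getD_eq_getElem _ _ (by omega), List.getD_eq_getElem _ _ hi]
  have := List.isChain_iff_getElem.1 h i (by omega)
  simpa [List.get_eq_getElem] using this

lemma alt_parity {ls : List (Bool × ℕ)} (h : Alternating ls) :
    ∀ i, i < ls.length → (((ls.getD i (true, 0)).1 = (ls.getD 0 (true, 0)).1) ↔ i % 2 = 0) := by
  intro i
  induction i with
  | zero => simp
  | succ j ih =>
    intro hi
    have h1 := ih (by omega)
    have h2 := alt_adj h (i := j) hi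
    constructor
    · intro he
      by_contra ho
      have hj : j % 2 = 0 := by omega
      have := h1.2 hj
      exact h2 (this.trans he.symm)
    · intro he
      have hj : ¬ (j % 2 = 0) := by omega
      have hne : ¬ ((ls.getD j (true,0)).1 = (ls.getD 0 (true,0)).1) := fun hh => hj (h1.1 hh)
      cases hb : (ls.getD (j+1) (true,0)).1 <;> cases hb0 : (ls.getD 0 (true,0)).1 <;>
        cases hbj : (ls.getD j (true,0)).1 <;> simp_all

lemma alt_take {ls : List (Bool × ℕ)} (h : Alternating ls) (k : ℕ) : Alternating (ls.take k) := by
  have : ls = ls.take k ++ ls.drop k := (List.take_append_drop k ls).symm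
  rw [this] at h
  exact (List.isChain_append.1 h).1

lemma alt_drop {ls : List (Bool × ℕ)} (h : Alternating ls) (k : ℕ) : Alternating (ls.drop k) := by
  have : ls = ls.take k ++ ls.drop k := (List.take_append_drop k ls).symm
  rw [this] at h
  exact (List.isChain_append.1 h).2.1

lemma alt_glue {ls : List (Bool × ℕ)} (h : Alternating ls) {t1 t2 : ℕ}
    (h1 : t1 < t2) (h2 : t2 ≤ ls.length) (hp1 : t1 % 2 = 0) (hp2 : t2 % 2 = 0) :
    Alternating (ls.take t2 ++ ls.drop t1) := by
  refine List.isChain_append.2 ⟨alt_take h t2, alt_drop h t1, ?_⟩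
  intro a ha b hb
  rw [List.getLast?_eq_getElem?] at ha
  rw [List.head?_drop] at hb
  have hlen : (ls.take t2).length = t2 := by simp; omega
  rw [hlen, List.getElem?_take, if_pos (by omega)] at ha
  -- a = ls[t2-1], b = ls[t1]
  have ha' : (ls.getD (t2-1) (true,0)) = a := by
    rw [List.getD_eq_getElem?_getD, ha]; rfl
  have hb' : (ls.getD t1 (true,0)) = b := by
    rw [List.getD_eq_getElem?_getD, hb]; rfl
  have hpa := alt_parity h (t2-1) (by omega)
  have hpb := alt_parity h t1 (by omega)
  rw [ha'] at hpa; rw [hb'] at hpb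
  have hodd : ¬ ((t2 - 1) % 2 = 0) := by omega
  intro hab
  exact hodd (hpa.1 (hab.trans (hpb.2 hp1)))


def M0 : GFA (Fin 3) where
  Q := Fin 4
  finQ := inferInstance
  start := 0
  accept := {0, 3}
  ruleL := {([0], 0, 1), ([], 0, 2), ([], 3, 2)}
  ruleR := {(1, [1], 0), (2, [2], 3)}
  finL := ((Set.finite_singleton _).insert _).insert _
  finR := (Set.finite_singleton _).insert _

attribute [reducible] M0

instance (n : ℕ) : OfNat M0.Q n := inferInstanceAs (OfNat (Fin 4) n)

lemma M0_simple : M0.Simple := by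
  refine ⟨?_, ?_⟩
  · rintro r hr
    simp only [M0, Set.mem_insert_iff, Set.mem_singleton_iff] at hr
    rcases hr with rfl | rfl | rfl <;> simp
  · rintro r hr
    simp only [M0, Set.mem_insert_iff, Set.mem_singleton_iff] at hr
    rcases hr with rfl | rfl <;> simp

lemma M0_inv : ∀ (ls : List (Bool × ℕ)) (x y : List (Fin 3)) (q f : Fin 4), f ∈ M0.accept →
    M0.Chain (x, q, y) ls ([], f, []) →
    (q = 0 → ∃ n m, x = List.replicate n 0 ∧ y = List.replicate n 1 ++ List.replicate m 2) ∧
    (q = 1 → ∃ n m, x = List.replicate n 0 ∧ y = List.replicate (n+1) 1 ++ List.replicate m 2) ∧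
    (q = 2 → x = [] ∧ ∃ m, y = List.replicate (m+1) 2) ∧
    (q = 3 → x = [] ∧ ∃ m, y = List.replicate m 2) := by
  intro ls
  induction ls with
  | nil =>
    intro x y q f hf h
    have := chain_nil_inv h
    injection this with e1 h2
    injection h2 with e2 e3
    subst e1; subst e3; subst e2
    simp only [M0, Set.mem_insert_iff, Set.mem_singleton_iff] at hf
    refine ⟨fun _ => ⟨0, 0, by simp⟩, fun h1 => ?_, fun h2 => ?_, fun _ => ⟨rfl, 0, by simp⟩⟩
    · rcases hf with rfl | rfl <;> simp_all
    · rcases hf with rfl | rfl <;> simp_all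
  | cons l ls ih =>
    intro x y q f hf h
    cases h with
    | cons hs hc =>
      rename_i c1
      rcases step_inv hs with ⟨u, xx, p, hr, he, hl, hcc⟩ | ⟨v, xx, p, hr, he, hl, hcc⟩ <;>
        simp only at hr he hcc <;> subst hcc <;> subst he
      · have ih' := ih u y p f hf hc
        simp only [M0, Set.mem_insert_iff, Set.mem_singleton_iff, Prod.mk.injEq] at hr
        rcases hr with ⟨h1, h2, h3⟩ | ⟨h1, h2, h3⟩ | ⟨h1, h2, h3⟩ <;> subst h1 <;> subst h2 <;> subst h3
        · -- rule ([0], 0, 1) : q = 0, p = 1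
          obtain ⟨n, m, hx, hy⟩ := ih'.2.1 rfl
          refine ⟨fun _ => ⟨n+1, m, ?_, hy⟩, by simp, by simp, by simp⟩
          rw [hx, List.replicate_add]; simp
        · -- rule ([], 0, 2)
          obtain ⟨hx, m, hy⟩ := ih'.2.2.1 rfl
          refine ⟨fun _ => ⟨0, m+1, by simpa using hx, by simpa using hy⟩, by simp, by simp, by simp⟩
        · -- rule ([], 3, 2)
          obtain ⟨hx, m, hy⟩ := ih'.2.2.1 rfl
          exact ⟨by simp, by simp, by simp, fun _ => ⟨by simpa using hx, m+1, by simpa using hy⟩⟩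
      · have ih' := ih x v p f hf hc
        simp only [M0, Set.mem_insert_iff, Set.mem_singleton_iff, Prod.mk.injEq] at hr
        rcases hr with ⟨h1, h2, h3⟩ | ⟨h1, h2, h3⟩ <;> subst h1 <;> subst h2 <;> subst h3
        · -- rule (1, [1], 0) : q = 1
          obtain ⟨n, m, hx, hv⟩ := ih'.1 rfl
          refine ⟨by simp, fun _ => ⟨n, m, hx, ?_⟩, by simp, by simp⟩
          rw [hv, show n + 1 = 1 + n by omega, List.replicate_add]; simp
        · -- rule (2, [2], 3) : q = 2
          obtain ⟨hx, m, hv⟩ := ih'.2.2.2 rfl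
          refine ⟨by simp, by simp, fun _ => ⟨hx, m, ?_⟩, by simp⟩
          rw [hv, show m + 1 = 1 + m by omega, List.replicate_add]; simp

inductive TF : List (Bool × ℕ) → Prop
  | nil : TF []
  | cons (a b : ℕ) {l} : TF l → TF ((true, a) :: (false, b) :: l)

lemma TF.alt' {l} (h : TF l) : Alternating l ∧ (∀ x ∈ l.head?, x.1 = true) := by
  induction h with
  | nil => simp [Alternating, List.Chain']
  | cons a b h ih =>
    refine ⟨?_, by simp⟩
    rw [Alternating, List.Chain', List.isChain_cons_cons]
    refine ⟨by simp, ?_⟩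
    rw [List.isChain_cons]
    refine ⟨?_, ih.1⟩
    intro y hy
    have := ih.2 y hy
    simp [this]

lemma TF.append {l1 l2} (h1 : TF l1) (h2 : TF l2) : TF (l1 ++ l2) := by
  induction h1 with
  | nil => simpa
  | cons a b h ih => exact .cons a b ih

def lsAB : ℕ → List (Bool × ℕ)
  | 0 => []
  | n+1 => (true, 1) :: (false, 1) :: lsAB n

def lsC : ℕ → List (Bool × ℕ)
  | 0 => []
  | m+1 => (true, 0) :: (false, 1) :: lsC m

lemma TF_lsAB (n : ℕ) : TF (lsAB n) := by
  induction n with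
  | zero => exact .nil
  | succ n ih => exact .cons _ _ ih

lemma TF_lsC (m : ℕ) : TF (lsC m) := by
  induction m with
  | zero => exact .nil
  | succ m ih => exact .cons _ _ ih

lemma chainAB (y : List (Fin 3)) :
    ∀ n, M0.Chain (List.replicate n 0, 0, List.replicate n 1 ++ y) (lsAB n) ([], 0, y) := by
  intro n
  induction n with
  | zero => simpa [lsAB] using GFA.Chain.nil (M := M0) ([], 0, y)
  | succ n ih =>
    have s1 : M0.Step (List.replicate n 0 ++ [0], 0, List.replicate (n+1) 1 ++ y) (true, 1)
        (List.replicate n 0, 1, List.replicate (n+1) 1 ++ y) := by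
      have : (([0] : List (Fin 3)), (0 : Fin 4), (1 : Fin 4)) ∈ M0.ruleL := by simp [M0]
      exact GFA.Step.left this
    have s2 : M0.Step (List.replicate n 0, 1, [1] ++ (List.replicate n 1 ++ y)) (false, 1)
        (List.replicate n 0, 0, List.replicate n 1 ++ y) := by
      have : ((1 : Fin 4), ([1] : List (Fin 3)), (0 : Fin 4)) ∈ M0.ruleR := by simp [M0]
      exact GFA.Step.right this
    have e1 : List.replicate (n+1) (0 : Fin 3) = List.replicate n 0 ++ [0] := by
      rw [List.replicate_add]; simp
    have e2 : List.replicate (n+1) (1 : Fin 3) ++ y = [1] ++ (List.replicate n 1 ++ y) := by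
      rw [show n + 1 = 1 + n by omega, List.replicate_add]; simp
    rw [lsAB, e1]
    exact .cons s1 (.cons (e2 ▸ s2) ih)

lemma chainC : ∀ m, M0.Chain ([], 3, List.replicate m 2) (lsC m) ([], 3, []) := by
  intro m
  induction m with
  | zero => simpa [lsC] using GFA.Chain.nil (M := M0) ([], 3, [])
  | succ m ih =>
    have s1 : M0.Step (([] : List (Fin 3)) ++ [], 3, List.replicate (m+1) 2) (true, 0)
        ([], 2, List.replicate (m+1) 2) := by
      have : (([] : List (Fin 3)), (3 : Fin 4), (2 : Fin 4)) ∈ M0.ruleL := by simp [M0]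
      simpa using GFA.Step.left (u := []) this
    have s2 : M0.Step (([] : List (Fin 3)), 2, [2] ++ List.replicate m 2) (false, 1)
        ([], 3, List.replicate m 2) := by
      have : ((2 : Fin 4), ([2] : List (Fin 3)), (3 : Fin 4)) ∈ M0.ruleR := by simp [M0]
      exact GFA.Step.right this
    have e2 : List.replicate (m+1) (2 : Fin 3) = [2] ++ List.replicate m 2 := by
      rw [show m + 1 = 1 + m by omega, List.replicate_add]; simp
    rw [lsC]
    exact .cons (by simpa using s1) (.cons (e2 ▸ s2) ih)

lemma M0_langAlt : M0.langAlt = abcLang := by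
  ext w
  constructor
  · rintro ⟨x, y, ls, f, rfl, hf, _, hchain⟩
    obtain ⟨n, m, hx, hy⟩ := (M0_inv ls x y M0.start f hf hchain).1 rfl
    exact ⟨n, m, by rw [hx, hy, List.append_assoc]⟩
  · rintro ⟨n, m, rfl⟩
    refine ⟨List.replicate n 0, List.replicate n 1 ++ List.replicate m 2, ?_⟩
    cases m with
    | zero =>
      refine ⟨lsAB n, 0, by simp [List.append_assoc], by simp [M0], (TF_lsAB n).alt'.1, ?_⟩
      simpa using chainAB [] n
    | succ m =>
      refine ⟨lsAB n ++ ((true, 0) :: (false, 1) :: lsC m), 3, by simp [List.append_assoc],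
        by simp [M0], ((TF_lsAB n).append (.cons _ _ (TF_lsC m))).alt'.1, ?_⟩
      refine chain_append (chainAB (List.replicate (m+1) 2) n) ?_
      have s1 : M0.Step (([] : List (Fin 3)), 0, List.replicate (m+1) 2) (true, 0)
          ([], 2, List.replicate (m+1) 2) := by
        have : (([] : List (Fin 3)), (0 : Fin 4), (2 : Fin 4)) ∈ M0.ruleL := by simp [M0]
        simpa using GFA.Step.left (u := []) this
      have s2 : M0.Step (([] : List (Fin 3)), 2, [2] ++ List.replicate m 2) (false, 1)
          ([], 3, List.replicate m 2) := by
        have : ((2 : Fin 4), ([2] : List (Fin 3)), (3 : Fin 4)) ∈ M0.ruleR := by simp [M0]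
        exact GFA.Step.right this
      have e2 : List.replicate (m+1) (2 : Fin 3) = [2] ++ List.replicate m 2 := by
        rw [show m + 1 = 1 + m by omega, List.replicate_add]; simp
      exact .cons s1 (.cons (e2 ▸ s2) (chainC m))

lemma countP_neg (ls : List (Bool × ℕ)) :
    ls.length = ls.countP (fun l => l.1) + ls.countP (fun l => !l.1) := by
  rw [List.length_eq_countP_add_countP (fun l : Bool × ℕ => l.1)]
  congr 1
  apply List.countP_congr
  intro a _
  cases h : a.1 <;> simp [h]

lemma not_epsfree : ¬ ∃ M : GFA (Fin 3), M.Simple ∧ M.EpsFree ∧ M.langAlt = abcLang := by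
  rintro ⟨M, hS, hE, hL⟩
  haveI := M.finQ
  haveI : Fintype M.Q := Fintype.ofFinite M.Q
  set n := Fintype.card M.Q with hn
  -- the word a^n b^n c^(2n)
  have hw : (List.replicate n (0:Fin 3) ++ List.replicate n (1:Fin 3) ++ List.replicate (2*n) (2:Fin 3)) ∈ M.langAlt := by
    rw [hL]; exact ⟨n, 2*n, rfl⟩
  obtain ⟨x, y, ls, f, hxy, hf, halt, hchain⟩ := hw
  have hones := labels_one hS hE hchain
  have hcnt := chain_count hchain hones
  simp only [List.length_nil, Nat.zero_add] at hcnt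
  have hlenw : x.length + y.length = 4 * n := by
    have := congrArg List.length hxy
    simp at this; omega
  have hlsl : ls.length = 4 * n := by
    have := countP_neg ls
    omega
  have hcT : 2 * ls.countP (fun l => l.1) = ls.length := alt_count ls halt (by omega)
  have hxlen : x.length = 2 * n := by
    have := countP_neg ls
    omega
  have hylen : y.length = 2 * n := by omega
  -- identify x and y
  have hx : x = List.replicate n (0:Fin 3) ++ List.replicate n (1:Fin 3) := by
    have h1 : x = (x ++ y).take x.length := by simp
    rw [h1, ← hxy, hxlen]
    exact List.take_left' (by simp; ring)
  have hy : y = List.replicate (2*n) (2:Fin 3) := by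
    have h1 : y = (x ++ y).drop x.length := by simp
    rw [h1, ← hxy, hxlen]
    exact List.drop_left' (by simp; ring)
  subst hx; subst hy
  -- extract the configuration sequence
  obtain ⟨g, hg0, hgN, hgs⟩ := chain_configs hchain
  have key : ∀ t, t ≤ n → (g (2*t)).1 = List.replicate n (0:Fin 3) ++ List.replicate (n-t) (1:Fin 3)
      ∧ (g (2*t)).2.2 = List.replicate (2*n-t) (2:Fin 3) := by
    intro t ht
    have hpre := chain_of_configs hgs 0 (2*t) (by omega) (by omega)
    rw [List.drop_zero, hg0] at hpre
    have hone' : ∀ l ∈ ls.take (2*t), l.2 = 1 := fun l hl => hones l (List.mem_of_mem_take hl)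
    have hc := chain_count hpre hone'
    dsimp only at hc
    have hlent : (ls.take (2*t)).length = 2*t := by
      rw [List.length_take]; omega
    have hcT' := alt_count _ (alt_take halt (2*t)) (by rw [hlent]; omega)
    have hcnteq := countP_neg (ls.take (2*t))
    rw [hlent] at hcT' hcnteq
    have hxl : (g (2*t)).1.length = 2*n - t := by
      have h2 : (List.replicate n (0:Fin 3) ++ List.replicate n (1:Fin 3)).length = 2*n := by
        simp; ring
      omega
    have hyl : (g (2*t)).2.2.length = 2*n - t := by
      have h2 : (List.replicate (2*n) (2:Fin 3)).length = 2*n := by simp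
      omega
    have hfix := chain_fix hpre
    dsimp only at hfix
    constructor
    · have heq := List.prefix_iff_eq_take.1 hfix.1
      rw [heq, hxl, show 2*n - t = n + (n - t) by omega,
        show n + (n - t) = (List.replicate n (0:Fin 3)).length + (n - t) by simp,
        List.take_append, List.take_replicate]
      congr 2
      · simp only [List.length_replicate]; omega
      · rw [Nat.add_sub_cancel_left, List.take_replicate]; congr 1; omega
    · have hsub : ∀ b ∈ (g (2*t)).2.2, b = (2:Fin 3) := fun b hb =>
        List.eq_of_mem_replicate (hfix.2.mem hb)
      have := List.eq_replicate_length.2 hsub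
      rw [this, hyl]
  -- pigeonhole
  have main : ∀ a b : ℕ, a < b → b ≤ n → (g (2*a)).2.1 = (g (2*b)).2.1 → False := by
    intro a b hab hbn hpq
    set d := b - a with hd
    have hdpos : 0 < d := by omega
    set p := (g (2*a)).2.1 with hp
    set Xb := List.replicate n (0:Fin 3) ++ List.replicate (n-b) (1:Fin 3) with hXb
    set Yb := List.replicate (2*n-b) (2:Fin 3) with hYb
    have hga : g (2*a) = (Xb ++ List.replicate d (1:Fin 3), p, List.replicate d (2:Fin 3) ++ Yb) := by
      obtain ⟨h1, h2⟩ := key a (by omega)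
      have e1 : List.replicate (n-a) (1:Fin 3) = List.replicate (n-b) 1 ++ List.replicate d 1 := by
        rw [← List.replicate_add]; congr 1; omega
      have e2 : List.replicate (2*n-a) (2:Fin 3) = List.replicate d 2 ++ Yb := by
        rw [hYb, ← List.replicate_add]; congr 1; omega
      rw [show g (2*a) = ((g (2*a)).1, (g (2*a)).2.1, (g (2*a)).2.2) from rfl, h1, h2, e1, e2,
        List.append_assoc, hp]
    have hgb : g (2*b) = (Xb, p, Yb) := by
      obtain ⟨h1, h2⟩ := key b hbn
      rw [show g (2*b) = ((g (2*b)).1, (g (2*b)).2.1, (g (2*b)).2.2) from rfl, h1, h2,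
        hXb, hYb, hpq]
    -- the three chain pieces
    have P := chain_of_configs hgs 0 (2*a) (by omega) (by omega)
    rw [List.drop_zero, hg0, hga] at P
    have P' : ∀ z z', M.Chain (z ++ List.replicate a (1:Fin 3), M.start,
        List.replicate a (2:Fin 3) ++ z') (ls.take (2*a)) (z, p, z') := by
      have e1 : List.replicate n (0:Fin 3) ++ List.replicate n (1:Fin 3)
          = (Xb ++ List.replicate d 1) ++ List.replicate a 1 := by
        rw [hXb, List.append_assoc, List.append_assoc, ← List.replicate_add, ← List.replicate_add]
        congr 2; omega
      have e2 : List.replicate (2*n) (2:Fin 3)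
          = List.replicate a 2 ++ (List.replicate d 2 ++ Yb) := by
        rw [hYb, ← List.replicate_add, ← List.replicate_add]; congr 1; omega
      rw [e1, e2] at P
      exact chain_repl P
    have Mid := chain_of_configs hgs (2*a) (2*b) (by omega) (by omega)
    rw [hga, hgb] at Mid
    have Mid' : ∀ z z', M.Chain (z ++ List.replicate d (1:Fin 3), p,
        List.replicate d (2:Fin 3) ++ z') ((ls.take (2*b)).drop (2*a)) (z, p, z') :=
      chain_repl Mid
    have S := chain_of_configs hgs (2*b) ls.length (by omega) (le_refl _)
    rw [List.take_length, hgN, hgb] at S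
    -- assemble the pumped chain
    set xs := List.replicate n (0:Fin 3) ++ List.replicate (n+d) (1:Fin 3) with hxs
    set ys := List.replicate (2*n+d) (2:Fin 3) with hys
    have c1 : M.Chain (xs, M.start, ys) (ls.take (2*a))
        ((Xb ++ List.replicate d 1) ++ List.replicate d 1, p,
          List.replicate d 2 ++ (List.replicate d 2 ++ Yb)) := by
      have := P' ((Xb ++ List.replicate d 1) ++ List.replicate d 1)
        (List.replicate d 2 ++ (List.replicate d 2 ++ Yb))
      have e1 : ((Xb ++ List.replicate d 1) ++ List.replicate d 1) ++ List.replicate a (1:Fin 3) = xs := by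
        rw [hxs, hXb]
        simp only [List.append_assoc, ← List.replicate_add, List.append_cancel_left_eq]
        congr 1
        omega
      have e2 : List.replicate a (2:Fin 3) ++ (List.replicate d 2 ++ (List.replicate d 2 ++ Yb)) = ys := by
        rw [hys, hYb, ← List.replicate_add, ← List.replicate_add, ← List.replicate_add]
        congr 1; omega
      rwa [e1, e2] at this
    have c2 : M.Chain ((Xb ++ List.replicate d 1) ++ List.replicate d 1, p,
        List.replicate d 2 ++ (List.replicate d 2 ++ Yb)) ((ls.take (2*b)).drop (2*a))
        (Xb ++ List.replicate d 1, p, List.replicate d 2 ++ Yb) :=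
      Mid' (Xb ++ List.replicate d 1) (List.replicate d 2 ++ Yb)
    have c3 : M.Chain (Xb ++ List.replicate d 1, p, List.replicate d 2 ++ Yb)
        ((ls.take (2*b)).drop (2*a)) (Xb, p, Yb) := Mid' Xb Yb
    have cAll : M.Chain (xs, M.start, ys)
        (ls.take (2*a) ++ ((ls.take (2*b)).drop (2*a) ++ ((ls.take (2*b)).drop (2*a) ++ ls.drop (2*b))))
        ([], f, []) :=
      chain_append c1 (chain_append c2 (chain_append c3 S))
    -- the label list equals take (2b) ++ drop (2a)
    have hLS : ls.take (2*a) ++ ((ls.take (2*b)).drop (2*a) ++ ((ls.take (2*b)).drop (2*a) ++ ls.drop (2*b)))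
        = ls.take (2*b) ++ ls.drop (2*a) := by
      have e1 : ls.take (2*a) ++ (ls.take (2*b)).drop (2*a) = ls.take (2*b) := by
        have : (ls.take (2*b)).take (2*a) = ls.take (2*a) := by
          rw [List.take_take]; congr 1; omega
        rw [← this, List.take_append_drop]
      have e2 : (ls.take (2*b)).drop (2*a) ++ ls.drop (2*b) = ls.drop (2*a) := by
        conv_rhs => rw [← List.take_append_drop (2*b) ls]
        rw [List.drop_append_of_le_length (by rw [List.length_take]; omega)]
      rw [← List.append_assoc, e1, e2]
    rw [hLS] at cAll
    have haltLS : Alternating (ls.take (2*b) ++ ls.drop (2*a)) :=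
      alt_glue halt (by omega) (by omega) (by omega) (by omega)
    -- so the pumped word is accepted
    have hmem : xs ++ ys ∈ abcLang := by
      rw [← hL]
      exact ⟨xs, ys, _, f, rfl, hf, haltLS, cAll⟩
    -- but it is not in abcLang
    obtain ⟨n', m', heq⟩ := hmem
    have hc0 := congrArg (List.count (0:Fin 3)) heq
    have hc1 := congrArg (List.count (1:Fin 3)) heq
    rw [hxs, hys] at hc0 hc1
    simp [List.count_append, List.count_replicate] at hc0 hc1
    omega
  obtain ⟨t1, t2, hne, heq⟩ := Fintype.exists_ne_map_eq_of_card_lt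
    (fun t : Fin (n+1) => (g (2*(t:ℕ))).2.1) (by simp; omega)
  rcases lt_or_gt_of_ne hne with hlt | hlt
  · exact main t1 t2 hlt (by omega) heq
  · exact main t2 t1 hlt (by omega) heq.symm

theorem alt_epsfree_strict :
    (∃ M : GFA (Fin 3), M.Simple ∧ M.langAlt = abcLang) ∧
    (¬ ∃ M : GFA (Fin 3), M.Simple ∧ M.EpsFree ∧ M.langAlt = abcLang) ∧
    {L : Set (List (Fin 3)) | ∃ M : GFA (Fin 3), M.Simple ∧ M.EpsFree ∧ M.langAlt = L} ⊂
      {L : Set (List (Fin 3)) | ∃ M : GFA (Fin 3), M.Simple ∧ M.langAlt = L} := by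
  refine ⟨⟨M0, M0_simple, M0_langAlt⟩, not_epsfree, ?_, ?_⟩
  · rintro L ⟨M, hs, _, hl⟩
    exact ⟨M, hs, hl⟩
  · intro hsub
    have h1 : abcLang ∈ {L : Set (List (Fin 3)) | ∃ M : GFA (Fin 3), M.Simple ∧ M.langAlt = L} :=
      ⟨M0, M0_simple, M0_langAlt⟩
    obtain ⟨M, hs, he, hl⟩ := hsub h1
    exact not_epsfree ⟨M, hs, he, hl⟩

end IETW
end

section
/- The family of languages accepted by IETWGFAs under even computation is incomparable with each of the families of singleton languages, finite languages, and regular languages (i.e., neither is a subset of the other, and their intersection is nonempty, in each case). -/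
namespace IETW

variable {T : Type}

/-- Two families of languages are incomparable. -/
def Incomparable {T : Type} (X Y : Set (Set (List T))) : Prop :=
  ¬ X ⊆ Y ∧ ¬ Y ⊆ X ∧ (X ∩ Y).Nonempty

/-! ### Auxiliary development -/

section Aux
variable {T : Type}

/-- Length conservation along a chain. -/
lemma chain_len {M : GFA T} {c ls c'} (h : M.Chain c ls c') :
    c.1.length + c.2.2.length = (ls.map (·.2)).sum + c'.1.length + c'.2.2.length := by
  induction h with
  | nil c => simp
  | cons h h' ih =>
    cases h with
    | left hm => simp at ih ⊢; omega
    | right hm => simp at ih ⊢; omega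

lemma evenTrace_tail {l l' : Bool × ℕ} {ls : List (Bool × ℕ)}
    (h : EvenTrace (l :: l' :: ls)) : EvenTrace ls ∧ l.2 = l'.2 := by
  obtain ⟨hlen, halt, hp⟩ := h
  refine ⟨⟨?_, ?_, ?_⟩, ?_⟩
  · simp at hlen ⊢; omega
  · exact (List.IsChain.tail (List.IsChain.tail halt) : _)
  · intro i hi
    have := hp (i + 1) (by simp at hi ⊢; omega)
    have h2 : 2 * (i + 1) = (2 * i + 1) + 1 := by ring
    simp only [h2, List.getD_cons_succ] at this
    exact this
  · have := hp 0 (by simp)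
    simpa using this

lemma evenTrace_sum : ∀ ls : List (Bool × ℕ), EvenTrace ls → (ls.map (·.2)).sum % 2 = 0
  | [] => fun _ => by simp
  | [l] => fun h => absurd h.1 (by simp)
  | l :: l' :: ls => fun h => by
      obtain ⟨h1, h2⟩ := evenTrace_tail h
      have ih := evenTrace_sum ls h1
      simp at ih ⊢
      omega

/-- Every word accepted by an even computation has even length. -/
lemma langEven_even_length {M : GFA T} {w : List T} (h : w ∈ M.langEven) :
    w.length % 2 = 0 := by
  obtain ⟨x, y, ls, f, rfl, -, het, hch⟩ := h
  have h1 := chain_len hch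
  have h2 := evenTrace_sum ls het
  simp at h1 ⊢
  omega

/-- The trivial machine accepting nothing. -/
def Mvoid (T : Type) : GFA T where
  Q := Unit
  finQ := inferInstance
  start := ()
  accept := ∅
  ruleL := ∅
  ruleR := ∅
  finL := Set.finite_empty
  finR := Set.finite_empty

/-- The trivial machine accepting only the empty word. -/
def Mnil (T : Type) : GFA T where
  Q := Unit
  finQ := inferInstance
  start := ()
  accept := Set.univ
  ruleL := ∅
  ruleR := ∅
  finL := Set.finite_empty
  finR := Set.finite_empty

lemma chain_eq_of_no_rules {M : GFA T} (hL : M.ruleL = ∅) (hR : M.ruleR = ∅)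
    {c ls c'} (h : M.Chain c ls c') : c = c' := by
  induction h with
  | nil c => rfl
  | cons h h' ih =>
    cases h with
    | left hm => rw [hL] at hm; exact absurd hm (Set.notMem_empty _)
    | right hm => rw [hR] at hm; exact absurd hm (Set.notMem_empty _)

lemma Mvoid_lang : (Mvoid T).langEven = ∅ := by
  ext w
  simp only [GFA.langEven, Set.mem_setOf_eq, Set.mem_empty_iff_false, iff_false]
  rintro ⟨x, y, ls, f, -, hf, -, -⟩
  exact hf

lemma evenTrace_nil : EvenTrace ([] : List (Bool × ℕ)) :=
  ⟨rfl, List.isChain_nil, fun i hi => by simp at hi⟩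

lemma Mnil_lang : (Mnil T).langEven = {[]} := by
  ext w
  constructor
  · rintro ⟨x, y, ls, f, rfl, -, -, hch⟩
    have := chain_eq_of_no_rules rfl rfl hch
    simp only [Prod.mk.injEq] at this
    simp [this.1, this.2.2]
  · rintro rfl
    exact ⟨[], [], [], (), rfl, trivial, evenTrace_nil, GFA.Chain.nil _⟩

/-- The machine with rules `a q → q` and `q b → q`. -/
def M2 (a b : T) : GFA T where
  Q := Unit
  finQ := inferInstance
  start := ()
  accept := Set.univ
  ruleL := {([a], (), ())}
  ruleR := {((), [b], ())}
  finL := Set.finite_singleton _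
  finR := Set.finite_singleton _

lemma M2_chain_shape {a b : T} {c : List T × (M2 a b).Q × List T} {ls c'}
    (h : (M2 a b).Chain c ls c') (h1 : c'.1 = []) (h2 : c'.2.2 = []) :
    c.1 = List.replicate (ls.countP (fun p => p.1)) a ∧
    c.2.2 = List.replicate (ls.countP (fun p => !p.1)) b := by
  induction h with
  | nil c => simp [h1, h2]
  | cons h h' ih =>
    obtain ⟨hu, hv⟩ := ih h1 h2
    cases h with
    | left hm =>
      replace hm := Set.mem_singleton_iff.mp hm
      simp only [M2, Set.mem_singleton_iff, Prod.mk.injEq] at hm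
      obtain ⟨hx, -⟩ := hm
      subst hx
      dsimp only at hu hv
      refine ⟨?_, ?_⟩
      · rw [hu]; simp [List.countP_cons, List.replicate_succ']
      · simpa [List.countP_cons] using hv
    | right hm =>
      replace hm := Set.mem_singleton_iff.mp hm
      simp only [M2, Set.mem_singleton_iff, Prod.mk.injEq] at hm
      obtain ⟨-, hx, -⟩ : _ ∧ _ ∧ _ := ⟨(Prod.mk.inj hm).1, (Prod.mk.inj (Prod.mk.inj hm).2).1, (Prod.mk.inj (Prod.mk.inj hm).2).2⟩
      subst hx
      dsimp only at hu hv
      refine ⟨?_, ?_⟩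
      · simpa [List.countP_cons] using hu
      · rw [hv]; simp [List.countP_cons, List.replicate_succ]

lemma alt_countP : ∀ ls : List (Bool × ℕ), Alternating ls → ls.length % 2 = 0 →
    ls.countP (fun p => p.1) = ls.countP (fun p => !p.1)
  | [] => fun _ _ => rfl
  | [l] => fun _ h => by simp at h
  | l :: l' :: ls => fun halt hlen => by
      have hne : l.1 ≠ l'.1 := (List.isChain_cons_cons.mp halt).1
      have htail : Alternating ls := (List.IsChain.tail (List.IsChain.tail halt) : _)
      have ih := alt_countP ls htail (by simp at hlen ⊢; omega)
      simp only [List.countP_cons]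
      rcases Bool.eq_false_or_eq_true l.1 with h1 | h1 <;>
        rcases Bool.eq_false_or_eq_true l'.1 with h2 | h2 <;>
        simp [h1, h2] at hne ⊢ <;> omega

/-- The trace used to accept `aⁿbⁿ`. -/
def trL : ℕ → List (Bool × ℕ)
  | 0 => []
  | n + 1 => (true, 1) :: (false, 1) :: trL n

lemma trL_len (n : ℕ) : (trL n).length = 2 * n := by
  induction n with
  | zero => rfl
  | succ n ih => simp [trL, ih]; omega

lemma trL_mem : ∀ n, ∀ p ∈ trL n, p = ((true : Bool), 1) ∨ p = ((false : Bool), 1)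
  | 0 => by simp [trL]
  | n + 1 => by
      intro p hp
      simp only [trL, List.mem_cons] at hp
      rcases hp with rfl | rfl | hp
      · exact Or.inl rfl
      · exact Or.inr rfl
      · exact trL_mem n p hp

lemma trL_alt : ∀ n, Alternating (trL n)
  | 0 => List.isChain_nil
  | n + 1 => by
      have ih := trL_alt n
      cases n with
      | zero => exact List.isChain_cons_cons.mpr ⟨by simp, List.isChain_singleton _⟩
      | succ m =>
        show List.Chain' _ ((true, 1) :: (false, 1) :: trL (m + 1))
        rw [show trL (m + 1) = (true, 1) :: (false, 1) :: trL m from rfl] at ih ⊢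
        exact List.isChain_cons_cons.mpr ⟨by simp, List.isChain_cons_cons.mpr ⟨by simp, ih⟩⟩

lemma trL_even (n : ℕ) : EvenTrace (trL n) := by
  refine ⟨by rw [trL_len]; omega, trL_alt n, ?_⟩
  have hj : ∀ j, j < (trL n).length → ((trL n).getD j (true, 0)).2 = 1 := by
    intro j hjl
    rw [List.getD_eq_getElem _ _ hjl]
    rcases trL_mem n _ (List.getElem_mem hjl) with h | h <;> simp [h]
  intro i hi
  rw [hj _ (by omega), hj _ hi]

lemma trL_chain (a b : T) : ∀ n,
    (M2 a b).Chain (List.replicate n a, (), List.replicate n b) (trL n) ([], (), [])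
  | 0 => GFA.Chain.nil _
  | n + 1 => by
      have ih := trL_chain a b n
      have s1 : (M2 a b).Step (List.replicate (n + 1) a, (), List.replicate (n + 1) b)
          (true, 1) (List.replicate n a, (), List.replicate (n + 1) b) := by
        have := GFA.Step.left (M := M2 a b) (u := List.replicate n a)
          (v := List.replicate (n + 1) b) (x := [a]) (q := ()) (p := ())
          (Set.mem_singleton _)
        rwa [← List.replicate_succ'] at this
      have s2 : (M2 a b).Step (List.replicate n a, (), List.replicate (n + 1) b)
          (false, 1) (List.replicate n a, (), List.replicate n b) := by
        have := GFA.Step.right (M := M2 a b) (u := List.replicate n a)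
          (v := List.replicate n b) (x := [b]) (q := ()) (p := ())
          (Set.mem_singleton _)
        rwa [show ([b] : List T) ++ List.replicate n b = List.replicate (n + 1) b from rfl]
          at this
      exact GFA.Chain.cons s1 (GFA.Chain.cons s2 ih)

lemma M2_langEven {a b : T} :
    (M2 a b).langEven = {w | ∃ n, w = List.replicate n a ++ List.replicate n b} := by
  ext w
  constructor
  · rintro ⟨x, y, ls, f, rfl, -, ⟨hlen, halt, -⟩, hch⟩
    obtain ⟨hx, hy⟩ := M2_chain_shape hch rfl rfl
    replace hx : x = List.replicate (ls.countP (fun p => p.1)) a := hx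
    replace hy : y = List.replicate (ls.countP (fun p => !p.1)) b := hy
    have hc := alt_countP ls halt hlen
    exact ⟨_, by rw [hx, hy, hc]⟩
  · rintro ⟨n, rfl⟩
    exact ⟨_, _, trL n, (), rfl, trivial, trL_even n, trL_chain a b n⟩

lemma nil_regular : Language.IsRegular ({[]} : Language T) := by
  refine ⟨Bool, inferInstance, ⟨fun _ _ => false, true, {true}⟩, ?_⟩
  have hf : ∀ (w : List T), List.foldl (fun (_ : Bool) (_ : T) => false) false w = false := by
    intro w; induction w with
    | nil => rfl
    | cons c w ih => exact ih
  ext w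
  rw [DFA.mem_accepts, Set.mem_singleton_iff, show w ∈ ({[]} : Language T) ↔ w = [] from Iff.rfl]
  cases w with
  | nil => simp [DFA.eval, DFA.evalFrom]
  | cons c w' =>
    have hfe : DFA.eval (⟨fun _ _ => false, true, {true}⟩ : DFA T Bool) (c :: w') = false :=
      hf w'
    rw [hfe]
    simp

lemma univ_regular : Language.IsRegular (Set.univ : Language T) :=
  ⟨Unit, inferInstance, ⟨fun _ _ => (), (), Set.univ⟩, by
    ext w; exact iff_of_true trivial trivial⟩

lemma Lab_not_regular {a b : T} (hab : a ≠ b) :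
    ¬ Language.IsRegular
      ({w | ∃ n, w = List.replicate n a ++ List.replicate n b} : Language T) := by
  classical
  rintro ⟨σ, _, M, hM⟩
  set n := Fintype.card σ with hn
  have hmem : (List.replicate n a ++ List.replicate n b) ∈ M.accepts := by
    rw [hM]; exact ⟨n, rfl⟩
  obtain ⟨x, y, z, hxyz, hlen2, hy, hsub⟩ := M.pumping_lemma hmem (by simp; omega)
  have hysub : ∀ c ∈ y, c = a := by
    intro c hc
    have hpre : (x ++ y) <+: List.replicate n a := by
      refine List.prefix_of_prefix_length_le ⟨z, hxyz.symm⟩ (⟨List.replicate n b, rfl⟩)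
        (by simpa using hlen2)
    exact List.eq_of_mem_replicate (hpre.subset (List.mem_append_right x hc))
  have hW : x ++ (y ++ y) ++ z ∈ M.accepts := by
    apply hsub
    refine Language.mem_mul.mpr ⟨x ++ (y ++ y), Language.mem_mul.mpr
      ⟨x, rfl, y ++ y, ?_, rfl⟩, z, rfl, rfl⟩
    exact Language.mem_kstar.mpr ⟨[y, y], by simp, by
      intro u hu
      rcases List.mem_cons.mp hu with rfl | hu
      · rfl
      · rcases List.mem_cons.mp hu with rfl | hu
        · rfl
        · simp at hu⟩
  rw [hM] at hW
  obtain ⟨m, hm⟩ := hW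
  have hcnt := congrArg (List.count a) hm
  have hcnt' := congrArg (List.count b) hm
  have horig := congrArg (List.count a) hxyz
  have horig' := congrArg (List.count b) hxyz
  simp [List.count_append, List.count_replicate, hab, Ne.symm hab] at hcnt hcnt' horig horig'
  have hya : y.count a = y.length :=
    List.count_eq_length.mpr (fun c hc => (hysub c hc).symm)
  have hyb : y.count b = 0 :=
    List.count_eq_zero.mpr (fun hc => hab ((hysub b hc).symm))
  have : y.length = 0 := by omega
  exact hy (List.length_eq_zero_iff.mp this)

lemma Lab_infinite {a b : T} :
    ({w | ∃ n, w = List.replicate n a ++ List.replicate n b} : Set (List T)).Infinite := by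
  have hinj : Function.Injective
      (fun n : ℕ => List.replicate n a ++ List.replicate n b) := by
    intro m k h
    have := congrArg List.length h
    simp at this
    omega
  exact Set.infinite_of_injective_forall_mem hinj (fun k => ⟨k, rfl⟩)

lemma singleton_a_not_in_even {M : GFA T} (a : T) : M.langEven ≠ {[a]} := by
  intro h
  have : [a] ∈ M.langEven := h ▸ rfl
  have := langEven_even_length this
  simp at this

end Aux

theorem even_family_incomparable {T : Type} (a b : T) (hab : a ≠ b) :
    Incomparable {L : Set (List T) | ∃ M : GFA T, M.langEven = L}
        {L : Set (List T) | ∃ w : List T, L = {w}} ∧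
    Incomparable {L : Set (List T) | ∃ M : GFA T, M.langEven = L}
        {L : Set (List T) | L.Finite} ∧
    Incomparable {L : Set (List T) | ∃ M : GFA T, M.langEven = L}
        {L : Set (List T) | Language.IsRegular (L : Language T)} := by
  have hnil : ({[]} : Set (List T)) ∈ {L : Set (List T) | ∃ M : GFA T, M.langEven = L} :=
    ⟨Mnil T, Mnil_lang⟩
  have hone : ({[a]} : Set (List T)) ∉ {L : Set (List T) | ∃ M : GFA T, M.langEven = L} := by
    rintro ⟨M, hM⟩
    exact singleton_a_not_in_even a hM
  refine ⟨⟨?_, ?_, ⟨{[]}, hnil, ⟨[], rfl⟩⟩⟩,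
    ⟨?_, ?_, ⟨{[]}, hnil, Set.finite_singleton _⟩⟩,
    ⟨?_, ?_, ⟨{[]}, hnil, nil_regular⟩⟩⟩
  · -- even family not ⊆ singletons: ∅
    intro h
    obtain ⟨w, hw⟩ := h ⟨Mvoid T, Mvoid_lang⟩
    have : w ∈ (∅ : Set (List T)) := by rw [hw]; rfl
    exact this
  · -- singletons not ⊆ even family: {[a]}
    intro h
    exact hone (h ⟨[a], rfl⟩)
  · -- even family not ⊆ finite: {aⁿbⁿ}
    intro h
    exact Lab_infinite (a := a) (b := b) (h ⟨M2 a b, M2_langEven⟩)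
  · -- finite not ⊆ even family: {[a]}
    intro h
    exact hone (h (Set.finite_singleton _))
  · -- even family not ⊆ regular: {aⁿbⁿ}
    intro h
    exact Lab_not_regular hab (h ⟨M2 a b, M2_langEven⟩)
  · -- regular not ⊆ even family: univ
    intro h
    obtain ⟨M, hM⟩ := h (univ_regular (T := T))
    have : [a] ∈ M.langEven := by rw [hM]; trivial
    have := langEven_even_length this
    simp at this

end IETW
end
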